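/- arXiv:2310.03471 — 7 statements merged into one kernel-verified Lean document; each statement's English description precedes it below -/
import Mathlib

section
/- For every ε ∈ (0, √2/2), the infimum over all infinitely divisible real random variables X with E[X²] < ∞ of P{|X − E[X]| ≤ ε·√(Var(X))} equals 0. -/
open MeasureTheory Real

/-- `n`-fold convolution power of a measure on `ℝ`; the `0`-fold convolution is `δ₀`. -/
noncomputable def convPow (ν : Measure ℝ) : ℕ → Measure ℝ
  | 0 => Measure.dirac 0
  | n + 1 => (convPow ν n).conv ν

/-- A probability measure `μ` on `ℝ` is infinitely divisible if for every `n ≥ 1` it is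
the `n`-fold convolution of some probability measure `ν`. -/
def InfinitelyDivisible (μ : Measure ℝ) : Prop :=
  ∀ n : ℕ, 0 < n → ∃ ν : Measure ℝ, IsProbabilityMeasure ν ∧ μ = convPow ν n

/-- The mean of a distribution on `ℝ`. -/
noncomputable def distMean (μ : Measure ℝ) : ℝ := ∫ x, x ∂μ

/-- The variance of a distribution on `ℝ`. -/
noncomputable def distVar (μ : Measure ℝ) : ℝ := ∫ x, (x - distMean μ) ^ 2 ∂μ

open Nat

noncomputable def pw (r : ℝ) (k : ℕ) : ℝ := Real.exp (-r) * r ^ k / k !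

lemma pw_nonneg {r : ℝ} (hr : 0 ≤ r) (k : ℕ) : 0 ≤ pw r k := by
  unfold pw
  exact div_nonneg (mul_nonneg (Real.exp_pos _).le (pow_nonneg hr _)) (Nat.cast_nonneg _)

lemma hasSum_exp_series (r : ℝ) : HasSum (fun k : ℕ => r ^ k / k !) (Real.exp r) := by
  rw [Real.exp_eq_exp_ℝ]; exact NormedSpace.expSeries_div_hasSum_exp r

lemma hasSum_k_series (r : ℝ) :
    HasSum (fun k : ℕ => (k : ℝ) * r ^ k / k !) (r * Real.exp r) := by
  have key : ∀ k : ℕ, ((k : ℝ) + 1) * r ^ (k + 1) / (k + 1)! = r * (r ^ k / k !) := by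
    intro k
    rw [Nat.factorial_succ]
    push_cast
    have hk : ((k : ℝ) + 1) ≠ 0 := by positivity
    have hf : ((k ! : ℝ)) ≠ 0 := by exact_mod_cast (Nat.factorial_pos k).ne'
    field_simp
    ring
  have h2 : HasSum (fun k : ℕ => ((k + 1 : ℕ) : ℝ) * r ^ (k + 1) / (k + 1)!)
      (r * Real.exp r) := by
    simpa [key] using (hasSum_exp_series r).mul_left r
  have h3 := (hasSum_nat_add_iff (f := fun n : ℕ => (n : ℝ) * r ^ n / n !) 1).mp (by
    simpa using h2)
  simpa using h3

lemma hasSum_kk_series (r : ℝ) :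
    HasSum (fun k : ℕ => (k : ℝ) * ((k : ℝ) - 1) * r ^ k / k !) (r ^ 2 * Real.exp r) := by
  have key : ∀ k : ℕ, ((k : ℝ) + 2) * (((k : ℝ) + 2) - 1) * r ^ (k + 2) / (k + 2)! =
      r ^ 2 * (r ^ k / k !) := by
    intro k
    have : (k + 2)! = (k + 2) * ((k + 1) * k !) := by
      rw [Nat.factorial_succ, Nat.factorial_succ]
    rw [this]
    push_cast
    have hf : ((k ! : ℝ)) ≠ 0 := by exact_mod_cast (Nat.factorial_pos k).ne'
    have h1 : ((k : ℝ) + 1) ≠ 0 := by positivity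
    have h2 : ((k : ℝ) + 2) ≠ 0 := by positivity
    field_simp
    ring
  have h2 : HasSum (fun k : ℕ => ((k + 2 : ℕ) : ℝ) * (((k + 2 : ℕ) : ℝ) - 1) * r ^ (k + 2) / (k + 2)!)
      (r ^ 2 * Real.exp r) := by
    simpa [key] using (hasSum_exp_series r).mul_left (r ^ 2)
  have h3 := (hasSum_nat_add_iff (f := fun n : ℕ => (n : ℝ) * ((n : ℝ) - 1) * r ^ n / n !) 2).mp (by
    simpa using h2)
  simpa [Finset.sum_range_succ] using h3

lemma hasSum_pw (r : ℝ) : HasSum (pw r) 1 := by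
  have h := (hasSum_exp_series r).mul_left (Real.exp (-r))
  have : Real.exp (-r) * Real.exp r = 1 := by
    rw [← Real.exp_add]; simp
  have e : pw r = fun k : ℕ => Real.exp (-r) * (r ^ k / k !) := by
    funext k; unfold pw; ring
  rw [e]
  simpa [this] using h

lemma hasSum_pw_mul (r : ℝ) (f : ℕ → ℝ) (g : ℝ)
    (h : HasSum (fun k => f k * r ^ k / k !) g) :
    HasSum (fun k => pw r k * f k) (Real.exp (-r) * g) := by
  have h2 := h.mul_left (Real.exp (-r))
  have e : (fun k => pw r k * f k) = fun k => Real.exp (-r) * (f k * r ^ k / k !) := by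
    funext k; unfold pw; ring
  rw [e]; exact h2

lemma exp_neg_mul (r g : ℝ) : Real.exp (-r) * (g * Real.exp r) = g := by
  rw [mul_comm g, ← mul_assoc, ← Real.exp_add]
  simp

lemma hasSum_pw_id (r : ℝ) : HasSum (fun k : ℕ => pw r k * (k : ℝ)) r := by
  have := hasSum_pw_mul r (fun k => (k : ℝ)) (r * Real.exp r) (hasSum_k_series r)
  rwa [exp_neg_mul] at this

lemma hasSum_pw_sq (r : ℝ) : HasSum (fun k : ℕ => pw r k * (k : ℝ) ^ 2) (r ^ 2 + r) := by
  have h : HasSum (fun k : ℕ => (k : ℝ) ^ 2 * r ^ k / k !) ((r ^ 2 + r) * Real.exp r) := by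
    have h1 := (hasSum_kk_series r).add (hasSum_k_series r)
    have e : (fun k : ℕ => (k : ℝ) * ((k : ℝ) - 1) * r ^ k / k ! + (k : ℝ) * r ^ k / k !) =
        fun k : ℕ => (k : ℝ) ^ 2 * r ^ k / k ! := by
      funext k
      have hf : ((k ! : ℝ)) ≠ 0 := by exact_mod_cast (Nat.factorial_pos k).ne'
      field_simp
      ring
    rw [e] at h1
    convert h1 using 1
    ring
  have := hasSum_pw_mul r _ _ h
  rwa [exp_neg_mul] at this

lemma hasSum_pw_var (r : ℝ) : HasSum (fun k : ℕ => pw r k * ((k : ℝ) - r) ^ 2) r := by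
  have h1 := ((hasSum_pw_sq r).sub ((hasSum_pw_id r).mul_left (2 * r))).add
    ((hasSum_pw r).mul_left (r ^ 2))
  have e : (fun k : ℕ => pw r k * (k : ℝ) ^ 2 - 2 * r * (pw r k * (k : ℝ)) + r ^ 2 * pw r k) =
      fun k : ℕ => pw r k * ((k : ℝ) - r) ^ 2 := by
    funext k; ring
  rw [e] at h1
  convert h1 using 1
  exacts [rfl, by ring]

noncomputable def pois (r : ℝ) : Measure ℝ :=
  Measure.sum (fun k : ℕ => ENNReal.ofReal (pw r k) • Measure.dirac (k : ℝ))

lemma pois_apply (r : ℝ) {s : Set ℝ} (hs : MeasurableSet s) :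
    pois r s = ∑' k : ℕ, ENNReal.ofReal (pw r k) * s.indicator (fun _ => 1) (k : ℝ) := by
  rw [pois, Measure.sum_apply _ hs]
  congr 1
  funext k
  rw [Measure.smul_apply, Measure.dirac_apply' _ hs, smul_eq_mul]
  rfl

instance pois_prob {r : ℝ} [hr : Fact (0 ≤ r)] : IsProbabilityMeasure (pois r) := by
  constructor
  rw [pois_apply r MeasurableSet.univ]
  simp only [Set.indicator_univ, mul_one]
  rw [← ENNReal.ofReal_tsum_of_nonneg (pw_nonneg hr.out) (hasSum_pw r).summable,
    (hasSum_pw r).tsum_eq, ENNReal.ofReal_one]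

lemma pois_zero : pois 0 = Measure.dirac 0 := by
  ext s hs
  rw [pois_apply 0 hs]
  have e : ∀ k : ℕ, ENNReal.ofReal (pw 0 k) * s.indicator (fun _ => 1) (k : ℝ) =
      if k = 0 then s.indicator (fun _ => 1) (0 : ℝ) else 0 := by
    intro k
    cases k with
    | zero => simp [pw]
    | succ n => simp [pw]
  rw [tsum_congr e, tsum_ite_eq]
  rw [Measure.dirac_apply' _ hs]
  rfl

lemma integrable_pois {r : ℝ} (hr : 0 ≤ r) {f : ℝ → ℝ} (hf : Measurable f)
    (h : Summable fun k : ℕ => pw r k * |f (k : ℝ)|) : Integrable f (pois r) := by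
  refine ⟨hf.aestronglyMeasurable, ?_⟩
  have hnn : ∀ k : ℕ, 0 ≤ pw r k * |f (k : ℝ)| := fun k =>
    mul_nonneg (pw_nonneg hr k) (abs_nonneg _)
  rw [HasFiniteIntegral, pois, lintegral_sum_measure]
  have e : ∀ k : ℕ, ∫⁻ a, ‖f a‖ₑ ∂(ENNReal.ofReal (pw r k) • Measure.dirac (k : ℝ)) =
      ENNReal.ofReal (pw r k * |f (k : ℝ)|) := by
    intro k
    rw [lintegral_smul_measure, lintegral_dirac' _ (by fun_prop),
      ENNReal.ofReal_mul (pw_nonneg hr k)]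
    congr 1
    rw [← Real.enorm_eq_ofReal_abs]
  rw [tsum_congr e, ← ENNReal.ofReal_tsum_of_nonneg hnn h]
  exact ENNReal.ofReal_lt_top

lemma integral_pois {r : ℝ} (hr : 0 ≤ r) {f : ℝ → ℝ} (hf : Measurable f)
    (h : Summable fun k : ℕ => pw r k * |f (k : ℝ)|) :
    ∫ x, f x ∂(pois r) = ∑' k : ℕ, pw r k * f (k : ℝ) := by
  have hint := integrable_pois hr hf h
  rw [pois] at hint ⊢
  rw [integral_sum_measure hint]
  congr 1
  funext k
  rw [integral_smul_measure, integral_dirac, ENNReal.toReal_ofReal (pw_nonneg hr k),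
    smul_eq_mul]

lemma distMean_pois {r : ℝ} (hr : 0 ≤ r) : distMean (pois r) = r := by
  have hsum : Summable fun k : ℕ => pw r k * |(k : ℝ)| := by
    refine (hasSum_pw_id r).summable.congr fun k => ?_
    rw [abs_of_nonneg (Nat.cast_nonneg k)]
  rw [distMean, integral_pois hr (f := fun x => x) measurable_id hsum]
  exact (hasSum_pw_id r).tsum_eq

lemma distVar_pois {r : ℝ} (hr : 0 ≤ r) : distVar (pois r) = r := by
  rw [distVar, distMean_pois hr]
  have hsum : Summable fun k : ℕ => pw r k * |((k : ℝ) - r) ^ 2| := by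
    refine (hasSum_pw_var r).summable.congr fun k => ?_
    rw [abs_of_nonneg (sq_nonneg _)]
  rw [integral_pois hr (f := fun x => (x - r) ^ 2) ((measurable_id.sub_const r).pow_const 2) hsum]
  exact (hasSum_pw_var r).tsum_eq

lemma integrable_sq_pois {r : ℝ} (hr : 0 ≤ r) : Integrable (fun x : ℝ => x ^ 2) (pois r) := by
  refine integrable_pois hr (by fun_prop) ?_
  refine (hasSum_pw_sq r).summable.congr fun k => ?_
  rw [abs_of_nonneg (sq_nonneg _)]

lemma pw_add (r s : ℝ) (n : ℕ) :
    ∑ p ∈ Finset.HasAntidiagonal.antidiagonal n, pw r p.1 * pw s p.2 = pw (r + s) n := by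
  rw [Finset.Nat.sum_antidiagonal_eq_sum_range_succ_mk]
  unfold pw
  rw [neg_add, Real.exp_add, add_pow]
  rw [Finset.mul_sum, Finset.sum_div]
  refine Finset.sum_congr rfl fun k hk => ?_
  have hkn : k ≤ n := Nat.lt_succ_iff.mp (Finset.mem_range.mp hk)
  have key : (n ! : ℝ) = (n.choose k : ℝ) * k ! * (n - k)! := by
    exact_mod_cast (Nat.choose_mul_factorial_mul_factorial hkn).symm
  have h1 : ((k ! : ℝ)) ≠ 0 := by exact_mod_cast (Nat.factorial_pos k).ne'
  have h2 : ((n - k)! : ℝ) ≠ 0 := by exact_mod_cast (Nat.factorial_pos (n - k)).ne'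
  have h3 : ((n ! : ℝ)) ≠ 0 := by exact_mod_cast (Nat.factorial_pos n).ne'
  field_simp
  rw [key]
  ring

lemma lintegral_pois (r : ℝ) {g : ℝ → ENNReal} (hg : Measurable g) :
    ∫⁻ x, g x ∂(pois r) = ∑' k : ℕ, ENNReal.ofReal (pw r k) * g (k : ℝ) := by
  rw [pois, lintegral_sum_measure]
  congr 1
  funext k
  rw [lintegral_smul_measure, lintegral_dirac' _ hg, smul_eq_mul]

lemma pois_conv {r s : ℝ} (hr : 0 ≤ r) (hs : 0 ≤ s) :
    (pois r).conv (pois s) = pois (r + s) := by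
  haveI : Fact (0 ≤ r) := ⟨hr⟩
  haveI : Fact (0 ≤ s) := ⟨hs⟩
  ext t ht
  have hadd : MeasurableSet ((fun p : ℝ × ℝ => p.1 + p.2) ⁻¹' t) := measurable_add ht
  rw [Measure.conv, Measure.map_apply measurable_add ht, Measure.prod_apply hadd,
    lintegral_pois r (measurable_measure_prodMk_left hadd)]
  have hslice : ∀ j : ℕ,
      pois s (Prod.mk (j : ℝ) ⁻¹' ((fun p : ℝ × ℝ => p.1 + p.2) ⁻¹' t)) =
      ∑' k : ℕ, ENNReal.ofReal (pw s k) * t.indicator (fun _ => 1) ((j : ℝ) + (k : ℝ)) := by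
    intro j
    have hms : MeasurableSet {y : ℝ | (j : ℝ) + y ∈ t} := (measurable_const_add (j : ℝ)) ht
    rw [show (Prod.mk (j : ℝ) ⁻¹' ((fun p : ℝ × ℝ => p.1 + p.2) ⁻¹' t)) = {y : ℝ | (j : ℝ) + y ∈ t} from rfl,
      pois_apply s hms]
    exact tsum_congr fun k => rfl
  calc (∑' j : ℕ, ENNReal.ofReal (pw r j) *
        pois s (Prod.mk (j : ℝ) ⁻¹' ((fun p : ℝ × ℝ => p.1 + p.2) ⁻¹' t)))
      = ∑' j : ℕ, ∑' k : ℕ, ENNReal.ofReal (pw r j) * ENNReal.ofReal (pw s k) *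
          t.indicator (fun _ => 1) ((j : ℝ) + (k : ℝ)) := by
        refine tsum_congr fun j => ?_
        rw [hslice j, ← ENNReal.tsum_mul_left]
        exact tsum_congr fun k => (mul_assoc _ _ _).symm
    _ = ∑' p : ℕ × ℕ, ENNReal.ofReal (pw r p.1) * ENNReal.ofReal (pw s p.2) *
          t.indicator (fun _ => 1) ((p.1 : ℝ) + (p.2 : ℝ)) :=
        (ENNReal.tsum_prod' (f := fun p : ℕ × ℕ => ENNReal.ofReal (pw r p.1) *
          ENNReal.ofReal (pw s p.2) * t.indicator (fun _ => 1) ((p.1 : ℝ) + (p.2 : ℝ)))).symm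
    _ = ∑' n : ℕ, ENNReal.ofReal (pw (r + s) n) * t.indicator (fun _ => 1) (n : ℝ) := by
        rw [← Finset.HasAntidiagonal.sigmaAntidiagonalEquivProd.tsum_eq, ENNReal.tsum_sigma']
        refine tsum_congr fun n => ?_
        simp only [Finset.HasAntidiagonal.sigmaAntidiagonalEquivProd_apply]
        rw [Finset.tsum_subtype (Finset.HasAntidiagonal.antidiagonal n) (fun p : ℕ × ℕ =>
          ENNReal.ofReal (pw r p.1) * ENNReal.ofReal (pw s p.2) *
            t.indicator (fun _ => 1) ((p.1 : ℝ) + (p.2 : ℝ)))]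
        have e : ∀ p ∈ Finset.HasAntidiagonal.antidiagonal n,
            ENNReal.ofReal (pw r p.1) * ENNReal.ofReal (pw s p.2) *
              t.indicator (fun _ => 1) ((p.1 : ℝ) + (p.2 : ℝ)) =
            ENNReal.ofReal (pw r p.1 * pw s p.2) * t.indicator (fun _ => 1) (n : ℝ) := by
          intro p hp
          rw [Finset.HasAntidiagonal.mem_antidiagonal] at hp
          rw [← ENNReal.ofReal_mul (pw_nonneg hr p.1)]
          congr 2
          rw [← Nat.cast_add, hp]
        rw [Finset.sum_congr rfl e, ← Finset.sum_mul, ← ENNReal.ofReal_sum_of_nonneg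
          (fun p _ => mul_nonneg (pw_nonneg hr p.1) (pw_nonneg hs p.2)), pw_add]
    _ = pois (r + s) t := (pois_apply (r + s) ht).symm

lemma convPow_pois {t : ℝ} (ht : 0 ≤ t) : ∀ n : ℕ, convPow (pois t) n = pois (n * t)
  | 0 => by simp [convPow, pois_zero]
  | n + 1 => by
    rw [convPow, convPow_pois ht n, pois_conv (mul_nonneg (Nat.cast_nonneg n) ht) ht]
    congr 1
    push_cast
    ring

lemma sqrt_half : Real.sqrt 2⁻¹ = Real.sqrt 2 / 2 := by
  have hs2 : Real.sqrt 2 * Real.sqrt 2 = 2 := Real.mul_self_sqrt (by norm_num)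
  rw [Real.sqrt_inv, eq_div_iff (two_ne_zero), inv_mul_eq_div, div_eq_iff
    (by positivity : Real.sqrt 2 ≠ 0), hs2]


theorem inf_eps_concentration_eq_zero (ε : ℝ) (hε : ε ∈ Set.Ioo 0 (Real.sqrt 2 / 2)) :
    sInf {r : ℝ | ∃ μ : Measure ℝ, IsProbabilityMeasure μ ∧ InfinitelyDivisible μ ∧
      Integrable (fun x => x ^ 2) μ ∧
      r = (μ {x : ℝ | |x - distMean μ| ≤ ε * Real.sqrt (distVar μ)}).toReal} = 0 := by
  obtain ⟨hε0, hε1⟩ := hε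
  haveI : Fact ((0 : ℝ) ≤ 2⁻¹) := ⟨by norm_num⟩
  have hprob : IsProbabilityMeasure (pois 2⁻¹) := pois_prob
  have hmean : distMean (pois 2⁻¹) = 2⁻¹ := distMean_pois (by norm_num)
  have hvar : distVar (pois 2⁻¹) = 2⁻¹ := distVar_pois (by norm_num)
  have hdiv : InfinitelyDivisible (pois 2⁻¹) := by
    intro n hn
    haveI : Fact ((0 : ℝ) ≤ (n : ℝ)⁻¹ * 2⁻¹) := ⟨by positivity⟩
    refine ⟨pois ((n : ℝ)⁻¹ * 2⁻¹), pois_prob, ?_⟩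
    rw [convPow_pois (by positivity) n]
    congr 1
    have hn' : (n : ℝ) ≠ 0 := Nat.cast_ne_zero.mpr hn.ne'
    field_simp
  have hbound : ε * Real.sqrt 2⁻¹ < 2⁻¹ := by
    rw [sqrt_half]
    have hpos : 0 < Real.sqrt 2 / 2 := by positivity
    calc ε * (Real.sqrt 2 / 2) < (Real.sqrt 2 / 2) * (Real.sqrt 2 / 2) :=
          mul_lt_mul_of_pos_right hε1 hpos
      _ = 2⁻¹ := by
          have hs2 : Real.sqrt 2 * Real.sqrt 2 = 2 := Real.mul_self_sqrt (by norm_num)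
          nlinarith [hs2]
  have hset : (pois 2⁻¹) {x : ℝ | |x - distMean (pois 2⁻¹)| ≤
      ε * Real.sqrt (distVar (pois 2⁻¹))} = 0 := by
    rw [hmean, hvar]
    have hms : MeasurableSet {x : ℝ | |x - 2⁻¹| ≤ ε * Real.sqrt 2⁻¹} :=
      measurableSet_le ((measurable_id.sub_const _).abs) measurable_const
    rw [pois_apply _ hms]
    have hterm : ∀ k : ℕ, ({x : ℝ | |x - 2⁻¹| ≤ ε * Real.sqrt 2⁻¹}).indicator
        (fun _ => (1 : ENNReal)) ((k : ℝ)) = 0 := by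
      intro k
      apply Set.indicator_of_notMem
      simp only [Set.mem_setOf_eq, not_le]
      refine lt_of_lt_of_le hbound ?_
      rcases k with _ | n
      · rw [show ((0 : ℕ) : ℝ) - 2⁻¹ = -2⁻¹ by norm_num, abs_neg, abs_of_nonneg (by norm_num)]
      · have h1 : (0 : ℝ) ≤ (n : ℝ) := Nat.cast_nonneg n
        have h2 : ((n + 1 : ℕ) : ℝ) - 2⁻¹ = (n : ℝ) + 2⁻¹ := by push_cast; ring
        rw [h2, abs_of_nonneg (by linarith)]
        linarith
    simp only [hterm, mul_zero, tsum_zero]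
  have h0mem : (0 : ℝ) ∈ {r : ℝ | ∃ μ : Measure ℝ, IsProbabilityMeasure μ ∧
      InfinitelyDivisible μ ∧ Integrable (fun x => x ^ 2) μ ∧
      r = (μ {x : ℝ | |x - distMean μ| ≤ ε * Real.sqrt (distVar μ)}).toReal} :=
    ⟨pois 2⁻¹, hprob, hdiv, integrable_sq_pois (by norm_num), by rw [hset]; simp⟩
  refine le_antisymm (csInf_le ⟨0, ?_⟩ h0mem) (le_csInf ⟨0, h0mem⟩ ?_)
  · rintro x ⟨μ, -, -, -, rfl⟩
    exact ENNReal.toReal_nonneg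
  · rintro b ⟨μ, -, -, -, rfl⟩
    exact ENNReal.toReal_nonneg
end

section
/- For geometric random variables X_p with parameter p ∈ (0,1), one has inf_{p ∈ (0,1)} P{|X_p − E[X_p]| ≤ √(Var(X_p))} = inf_{p ∈ (0,1)} P{|X_p − E[X_p]| < √(Var(X_p))} = 3/4; moreover the second infimum is attained at p = 3/4, where P{|X_{3/4} − E[X_{3/4}]| < √(Var(X_{3/4}))} = 3/4. -/
open MeasureTheory Real ProbabilityTheory

-- measure of Iio n
lemma geom_meas_Iio {p : ℝ} (h0 : 0 < p) (h1 : p < 1) (n : ℕ) :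
    (geometricMeasure ⟨p, ⟨h0.le, h1.le⟩⟩ (Set.Iio n)).toReal = 1 - (1 - p) ^ n := by
  have hq0 : (0:ℝ) ≤ 1 - p := by linarith
  have hq1 : (1:ℝ) - p < 1 := by linarith
  have hmeas : (geometricMeasure ⟨p, ⟨h0.le, h1.le⟩⟩ (Set.Iio n))
      = ∑ k ∈ Finset.range n, ENNReal.ofReal ((1-p)^k * p) := by
    rw [show Set.Iio n = ((Finset.range n : Finset ℕ) : Set ℕ) by ext; simp,
      ← sum_measure_singleton]
    refine Finset.sum_congr rfl fun k _ => ?_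
    exact geometricMeasure_singleton (fun h => h0.ne' (congrArg Subtype.val h)) k
  rw [hmeas, ← ENNReal.ofReal_sum_of_nonneg (fun k _ => by positivity),
    ENNReal.toReal_ofReal (by positivity)]
  have := geom_sum_eq (x := 1 - p) (by intro h; rw [sub_eq_self] at h; exact h0.ne' h) n
  rw [← Finset.sum_mul, this]
  rw [show (1:ℝ) - p - 1 = -p by ring, div_mul_eq_mul_div, div_eq_iff (by simpa using h0.ne')]
  ring


lemma sqrt_q_gt {q : ℝ} (h0 : 0 < q) (h1 : q < 1) : q < Real.sqrt q := by
  nlinarith [Real.sq_sqrt h0.le, Real.sqrt_nonneg q, Real.sqrt_pos.mpr h0]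

lemma abs_form {p : ℝ} (h0 : 0 < p) (h1 : p < 1) (k : ℕ) :
    (|(k : ℝ) - (1 / p - 1)| < Real.sqrt ((1 - p) / p ^ 2)
      ↔ |(k : ℝ) * p - (1 - p)| < Real.sqrt (1 - p)) ∧
    (|(k : ℝ) - (1 / p - 1)| ≤ Real.sqrt ((1 - p) / p ^ 2)
      ↔ |(k : ℝ) * p - (1 - p)| ≤ Real.sqrt (1 - p)) := by
  have hsq : Real.sqrt ((1 - p) / p ^ 2) = Real.sqrt (1 - p) / p := by
    rw [show (1-p)/p^2 = (1-p) * (1/p)^2 by field_simp, Real.sqrt_mul (by linarith),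
      Real.sqrt_sq (by positivity)]
    field_simp
  have key : ((k:ℝ) - (1/p-1)) = ((k:ℝ)*p - (1-p))/p := by
    rw [eq_div_iff h0.ne']; field_simp
  rw [hsq, key, abs_div, abs_of_pos h0, div_lt_div_iff_of_pos_right h0,
    div_le_div_iff_of_pos_right h0]
  exact ⟨Iff.rfl, Iff.rfl⟩

lemma strict_set_eq {p : ℝ} (h0 : 0 < p) (h1 : p < 1) :
    {k : ℕ | |(k : ℝ) - (1 / p - 1)| < Real.sqrt ((1 - p) / p ^ 2)}
      = Set.Iio ⌈((1 - p) + Real.sqrt (1 - p)) / p⌉₊ := by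
  ext k
  have hq0 : (0:ℝ) < 1 - p := by linarith
  have hqs : 1 - p < Real.sqrt (1 - p) := sqrt_q_gt hq0 (by linarith)
  simp only [Set.mem_setOf_eq, Set.mem_Iio, Nat.lt_ceil]
  rw [(abs_form h0 h1 k).1, abs_lt, lt_div_iff₀ h0]
  constructor
  · rintro ⟨-, h⟩; linarith
  · intro h
    have : (0:ℝ) ≤ (k:ℝ) * p := by positivity
    exact ⟨by linarith, by linarith⟩

lemma closed_set_eq {p : ℝ} (h0 : 3/4 < p) (h1 : p < 1) :
    {k : ℕ | |(k : ℝ) - (1 / p - 1)| ≤ Real.sqrt ((1 - p) / p ^ 2)}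
      = Set.Iio 1 := by
  have h0' : (0:ℝ) < p := by linarith
  have hq0 : (0:ℝ) < 1 - p := by linarith
  have hqs : 1 - p < Real.sqrt (1 - p) := sqrt_q_gt hq0 (by linarith)
  have hbig : Real.sqrt (1 - p) < 2*p - 1 := by
    nlinarith [Real.sq_sqrt hq0.le, Real.sqrt_nonneg (1-p)]
  ext k
  simp only [Set.mem_setOf_eq, Set.mem_Iio, Nat.lt_one_iff]
  rw [(abs_form h0' h1 k).2, abs_le]
  constructor
  · rintro ⟨-, h⟩
    by_contra hk
    have hk1 : (1:ℝ) ≤ (k:ℝ) := by exact_mod_cast Nat.one_le_iff_ne_zero.mpr hk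
    nlinarith [mul_le_mul_of_nonneg_right hk1 h0'.le]
  · rintro rfl
    simp only [Nat.cast_zero, zero_mul, zero_sub]
    exact ⟨by linarith, by linarith⟩

lemma key_ineq {q : ℝ} (h0 : 0 < q) (h1 : q < 1) {n : ℕ} (hn : 1 ≤ n)
    (hb : (q + Real.sqrt q) / (1 - q) ≤ n) : q ^ n ≤ 1/4 := by
  set t := Real.sqrt q with ht
  have ht0 : 0 < t := Real.sqrt_pos.mpr h0
  have ht2 : t^2 = q := Real.sq_sqrt h0.le
  have ht1 : t < 1 := by nlinarith
  have hn0 : (0:ℝ) < n := by exact_mod_cast hn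
  have htn : t * (n + 1) ≤ n := by
    rw [div_le_iff₀ (by linarith)] at hb
    nlinarith
  have hpow : (2:ℝ) ≤ (1 + 1/(n:ℝ))^n := by
    have hm2 : (-2:ℝ) ≤ 1/(n:ℝ) := by have h := one_div_nonneg.mpr hn0.le; linarith
    calc (2:ℝ) = 1 + (n:ℝ) * (1/(n:ℝ)) := by rw [mul_one_div, div_self hn0.ne']; norm_num
    _ ≤ (1 + 1/(n:ℝ))^n := one_add_mul_le_pow hm2 n
  have h2 : t ≤ n / (n + 1) := by rw [le_div_iff₀ (by linarith)]; linarith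
  have h3 : t ^ n ≤ ((n:ℝ) / (n + 1)) ^ n := pow_le_pow_left₀ ht0.le h2 n
  have h4 : ((n:ℝ) / (n + 1)) ^ n ≤ 1/2 := by
    rw [div_pow, div_le_iff₀ (by positivity)]
    have he : ((n:ℝ) + 1)^n = (n:ℝ)^n * (1 + 1/(n:ℝ))^n := by
      rw [← mul_pow]; congr 1; field_simp
    rw [he]
    have hnn : (0:ℝ) < (n:ℝ)^n := by positivity
    nlinarith
  have h5 : t ^ n ≤ 1/2 := le_trans h3 h4
  calc q ^ n = (t^n)^2 := by rw [← pow_mul, mul_comm, pow_mul, ht2]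
  _ ≤ (1/2)^2 := by nlinarith [pow_nonneg ht0.le n]
  _ = 1/4 := by norm_num


lemma strict_lb {p : ℝ} (h0 : 0 < p) (h1 : p < 1) :
    3/4 ≤ (geometricMeasure ⟨p, ⟨h0.le, h1.le⟩⟩
      {k : ℕ | |(k : ℝ) - (1 / p - 1)| < Real.sqrt ((1 - p) / p ^ 2)}).toReal := by
  rw [strict_set_eq h0 h1, geom_meas_Iio h0 h1]
  set n := ⌈((1 - p) + Real.sqrt (1 - p)) / p⌉₊ with hn
  have hq0 : (0:ℝ) < 1 - p := by linarith
  have hb0 : 0 < ((1 - p) + Real.sqrt (1 - p)) / p := by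
    have := Real.sqrt_nonneg (1 - p); positivity
  have hn1 : 1 ≤ n := Nat.one_le_iff_ne_zero.mpr (Nat.ceil_pos.mpr hb0).ne'
  have hble : ((1 - p) + Real.sqrt (1 - p)) / p ≤ n := Nat.le_ceil _
  have := key_ineq hq0 (by linarith) hn1
    (by rw [show (1:ℝ) - (1 - p) = p by ring]; exact hble)
  linarith

lemma closed_lb {p : ℝ} (h0 : 0 < p) (h1 : p < 1) :
    3/4 ≤ (geometricMeasure ⟨p, ⟨h0.le, h1.le⟩⟩
      {k : ℕ | |(k : ℝ) - (1 / p - 1)| ≤ Real.sqrt ((1 - p) / p ^ 2)}).toReal := by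
  refine le_trans (strict_lb h0 h1) ?_
  haveI := isProbabilityMeasure_geometricMeasure (p := ⟨p, ⟨h0.le, h1.le⟩⟩)
  exact ENNReal.toReal_mono (measure_lt_top _ _).ne
    (measure_mono fun k hk => le_of_lt (Set.mem_setOf_eq ▸ hk))

lemma closed_val {p : ℝ} (h34 : 3/4 < p) (h1 : p < 1) :
    (geometricMeasure ⟨p, ⟨(show 0 < p by linarith).le, h1.le⟩⟩
      {k : ℕ | |(k : ℝ) - (1 / p - 1)| ≤ Real.sqrt ((1 - p) / p ^ 2)}).toReal = p := by
  rw [closed_set_eq h34 h1, geom_meas_Iio (by linarith) h1]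
  ring

lemma at34 :
    (geometricMeasure ⟨(3 / 4 : ℝ), ⟨by norm_num, by norm_num⟩⟩
        {k : ℕ | |(k : ℝ) - (1 / (3 / 4) - 1)| <
          Real.sqrt ((1 - 3 / 4) / (3 / 4 : ℝ) ^ 2)}).toReal = 3 / 4 := by
  rw [strict_set_eq (by norm_num) (by norm_num), geom_meas_Iio (by norm_num) (by norm_num)]
  have hs : Real.sqrt (1 - 3/4) = 1/2 := by
    rw [show (1:ℝ) - 3/4 = (1/2)^2 by norm_num, Real.sqrt_sq (by norm_num)]
  rw [hs]
  norm_num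

theorem geometric_inf_concentration :
    sInf {r : ℝ | ∃ (p : ℝ) (h0 : 0 < p) (h1 : p < 1),
        r = (geometricMeasure ⟨p, ⟨h0.le, h1.le⟩⟩
          {k : ℕ | |(k : ℝ) - (1 / p - 1)| ≤ Real.sqrt ((1 - p) / p ^ 2)}).toReal} = 3 / 4 ∧
    sInf {r : ℝ | ∃ (p : ℝ) (h0 : 0 < p) (h1 : p < 1),
        r = (geometricMeasure ⟨p, ⟨h0.le, h1.le⟩⟩
          {k : ℕ | |(k : ℝ) - (1 / p - 1)| < Real.sqrt ((1 - p) / p ^ 2)}).toReal} = 3 / 4 ∧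
    (geometricMeasure ⟨(3 / 4 : ℝ), ⟨by norm_num, by norm_num⟩⟩
        {k : ℕ | |(k : ℝ) - (1 / (3 / 4) - 1)| <
          Real.sqrt ((1 - 3 / 4) / (3 / 4 : ℝ) ^ 2)}).toReal = 3 / 4 := by
  refine ⟨?_, ?_, at34⟩
  · set S : Set ℝ := {r : ℝ | ∃ (p : ℝ) (h0 : 0 < p) (h1 : p < 1),
        r = (geometricMeasure ⟨p, ⟨h0.le, h1.le⟩⟩
          {k : ℕ | |(k : ℝ) - (1 / p - 1)| ≤ Real.sqrt ((1 - p) / p ^ 2)}).toReal} with hS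
    have lb : ∀ r ∈ S, 3/4 ≤ r := by
      rintro r ⟨p, h0, h1, rfl⟩; exact closed_lb h0 h1
    have memw : ∀ w : ℝ, 3/4 < w → w < 1 → w ∈ S := by
      intro w hw0 hw1
      exact ⟨w, by linarith, hw1, (closed_val hw0 hw1).symm⟩
    have hne : S.Nonempty := ⟨7/8, memw (7/8) (by norm_num) (by norm_num)⟩
    have hbdd : BddBelow S := ⟨3/4, lb⟩
    refine le_antisymm ?_ (le_csInf hne lb)
    by_contra h
    push_neg at h
    set m := min (sInf S) 1 with hm
    have hm34 : 3/4 < m := lt_min h (by norm_num)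
    have hw : (3/4 + m)/2 ∈ S := memw _ (by linarith)
      (by have : m ≤ 1 := min_le_right _ _; linarith)
    have := csInf_le hbdd hw
    have hm' : m ≤ sInf S := min_le_left _ _
    linarith
  · set S : Set ℝ := {r : ℝ | ∃ (p : ℝ) (h0 : 0 < p) (h1 : p < 1),
        r = (geometricMeasure ⟨p, ⟨h0.le, h1.le⟩⟩
          {k : ℕ | |(k : ℝ) - (1 / p - 1)| < Real.sqrt ((1 - p) / p ^ 2)}).toReal} with hS
    have lb : ∀ r ∈ S, 3/4 ≤ r := by
      rintro r ⟨p, h0, h1, rfl⟩; exact strict_lb h0 h1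
    have hmem : (3/4 : ℝ) ∈ S := ⟨3/4, by norm_num, by norm_num, at34.symm⟩
    exact le_antisymm (csInf_le ⟨3/4, lb⟩ hmem) (le_csInf ⟨_, hmem⟩ lb)
end

section
/- Let X_p be a geometric random variable with parameter p ∈ (0, 3/4], and set q = 1 − p. Then P{|X_p − E[X_p]| ≤ √(Var(X_p))} = 1 − q^{⌊1/(1−√q)⌋}, where ⌊x⌋ denotes the greatest integer less than or equal to x. -/
open MeasureTheory Real ProbabilityTheory

theorem geometric_concentration_formula (p : ℝ) (h0 : 0 < p) (h34 : p ≤ 3 / 4) :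
    (geometricMeasure ⟨p, h0.le, h34.trans (by norm_num)⟩
        {k : ℕ | |(k : ℝ) - (1 / p - 1)| ≤ Real.sqrt ((1 - p) / p ^ 2)}).toReal =
      1 - (1 - p) ^ ⌊1 / (1 - Real.sqrt (1 - p))⌋ := by
  set q : ℝ := 1 - p with hq
  have hq0 : 0 ≤ q := by simp [hq]; linarith
  have hq4 : 1/4 ≤ q := by simp only [hq]; linarith
  have hq1 : q < 1 := by simp [hq]; linarith
  set s : ℝ := Real.sqrt q with hs
  have hs0 : 0 ≤ s := Real.sqrt_nonneg q
  have hs2 : s ^ 2 = q := Real.sq_sqrt hq0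
  have hshalf : 1/2 ≤ s := by
    have h := Real.sqrt_le_sqrt hq4
    rwa [show Real.sqrt (1/4) = 1/2 by
      rw [show (1/4:ℝ) = (1/2)^2 by norm_num, Real.sqrt_sq (by norm_num)]] at h
  have hs1 : s < 1 := by nlinarith [hs2]
  have hsne : (1 : ℝ) - s ≠ 0 := by linarith
  have hfl2 : (2 : ℤ) ≤ ⌊1 / (1 - s)⌋ := by
    apply Int.le_floor.mpr
    rw [le_div_iff₀ (by linarith)]
    push_cast; linarith
  set n : ℕ := (⌊1 / (1 - s)⌋).toNat with hn
  have hnz : (n : ℤ) = ⌊1 / (1 - s)⌋ := Int.toNat_of_nonneg (by linarith)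
  have hsqrt : Real.sqrt (q / p ^ 2) = s / p := by
    rw [Real.sqrt_div hq0, Real.sqrt_sq h0.le]
  have hp : p = (1 - s) * (1 + s) := by nlinarith [hs2]
  have hset : {k : ℕ | |(k : ℝ) - (1 / p - 1)| ≤ Real.sqrt ((1 - p) / p ^ 2)}
      = ↑(Finset.range n) := by
    ext k
    simp only [Set.mem_setOf_eq, Finset.coe_range, Set.mem_Iio, ← hq, hsqrt]
    rw [abs_le]
    constructor
    · rintro ⟨-, h2⟩
      have h2' : (k:ℝ) * p - (1 - p) ≤ s := by
        have h := mul_le_mul_of_nonneg_right h2 h0.le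
        have e1 : ((k:ℝ) - (1/p - 1)) * p = (k:ℝ)*p - (1-p) := by field_simp
        have e2 : (s/p) * p = s := by field_simp
        rw [e1, e2] at h; exact h
      have hk1 : (k : ℝ) + 1 ≤ 1 / (1 - s) := by
        rw [le_div_iff₀ (by linarith)]
        nlinarith [hs2, Nat.cast_nonneg (α := ℝ) k]
      have hk2 : ((k:ℤ) + 1) ≤ ⌊1 / (1 - s)⌋ := Int.le_floor.mpr (by push_cast; exact hk1)
      omega
    · intro hk
      have hk' : (k : ℝ) + 1 ≤ 1 / (1 - s) := by
        have h1 : ((k:ℝ) + 1) ≤ (n : ℝ) := by exact_mod_cast hk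
        have h2 : (n:ℝ) ≤ 1 / (1 - s) := by
          have := Int.floor_le (1 / (1 - s))
          rw [← hnz] at this; exact_mod_cast this
        linarith
      have h1 : ((k:ℝ) + 1) * (1 - s) ≤ 1 := by
        rw [← le_div_iff₀ (by linarith)]; exact hk'
      constructor
      · have hl : 1/p - 1 ≤ s/p := by
          rw [div_sub' h0.ne', div_le_div_iff₀ h0 h0]
          nlinarith [hs2]
        have hk0 : (0:ℝ) ≤ k := Nat.cast_nonneg k
        linarith
      · have key : (k:ℝ) ≤ (s + 1 - p)/p := by
          rw [le_div_iff₀ h0]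
          nlinarith [hs2, Nat.cast_nonneg (α := ℝ) k]
        have e : (s + 1 - p)/p = s/p + (1/p - 1) := by field_simp; ring
        linarith [key, e ▸ key]
  rw [hset]
  have hp0 : (⟨p, h0.le, h34.trans (by norm_num)⟩ : unitInterval) ≠ 0 := by
    intro h; have := congrArg Subtype.val h; simp at this; linarith
  rw [← MeasureTheory.sum_measure_singleton]
  have hpmf : ∀ k, geometricMeasure ⟨p, h0.le, h34.trans (by norm_num)⟩ {k}
      = ENNReal.ofReal (q ^ k * p) := fun k => geometricMeasure_singleton hp0 k
  simp_rw [hpmf]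
  rw [ENNReal.toReal_sum (by intro k _; exact ENNReal.ofReal_ne_top)]
  have hterm : ∀ k ∈ Finset.range n, (ENNReal.ofReal (q ^ k * p)).toReal = q ^ k * p := by
    intro k _; exact ENNReal.toReal_ofReal (by positivity)
  rw [Finset.sum_congr rfl hterm, ← Finset.sum_mul, geom_sum_eq (ne_of_lt hq1)]
  have hrhs : (1 - p) ^ ⌊1 / (1 - Real.sqrt (1 - p))⌋ = q ^ n := by
    rw [← hq, ← hs, ← hnz, zpow_natCast]
  rw [hrhs]
  have hq1' : q - 1 = -p := by rw [hq]; ring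
  rw [hq1', div_neg, neg_mul, div_mul_eq_mul_div, mul_div_assoc, div_self h0.ne',
    mul_one]
  ring
end

section
/- For symmetric geometric random variables X^S_p with parameter p ∈ (0,1), one has inf_{p ∈ (0,1)} P{|X^S_p − E[X^S_p]| ≤ √(Var(X^S_p))} = inf_{p ∈ (0,1)} P{|X^S_p − E[X^S_p]| < √(Var(X^S_p))} = √3/3; moreover the second infimum is attained at p = √3 − 1, where P{|X^S_{√3−1}| < 1} = √3/3. -/
open MeasureTheory Real ProbabilityTheory

/-- The law of the difference of two independent geometric random variables with
the same parameter `p`. -/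
noncomputable def symmGeometricMeasure {p : ℝ} (h0 : 0 < p) (h1 : p ≤ 1) : Measure ℤ :=
  ((geometricMeasure ⟨p, h0.le, h1⟩).prod (geometricMeasure ⟨p, h0.le, h1⟩)).map
    (fun x : ℕ × ℕ => (x.1 : ℤ) - (x.2 : ℤ))

variable {p : ℝ}

lemma geom_singleton (h0 : 0 < p) (h1 : p ≤ 1) (n : ℕ) :
    geometricMeasure ⟨p, h0.le, h1⟩ {n} = ENNReal.ofReal ((1-p)^n * p) := by
  have hp : (⟨p, h0.le, h1⟩ : unitInterval) ≠ 0 := fun h => h0.ne' (congrArg Subtype.val h)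
  exact geometricMeasure_singleton hp n

lemma tsum_ofReal_geom {c r : ℝ} (hc : 0 ≤ c) (hr0 : 0 ≤ r) (hr1 : r < 1) :
    ∑' a : ℕ, ENNReal.ofReal (c * r ^ a) = ENNReal.ofReal (c / (1 - r)) := by
  rw [← ENNReal.ofReal_tsum_of_nonneg (fun n => by positivity)
    ((summable_geometric_of_lt_one hr0 hr1).mul_left c)]
  rw [tsum_mul_left, tsum_geometric_of_lt_one hr0 hr1, div_eq_mul_inv]

instance instProbGeom (h0 : 0 < p) (h1 : p ≤ 1) :
    IsProbabilityMeasure (geometricMeasure ⟨p, h0.le, h1⟩) :=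
  inferInstance

lemma meas_f : Measurable (fun x : ℕ × ℕ => (x.1 : ℤ) - (x.2 : ℤ)) := by measurability

lemma symmGeom_singleton_neg (h0 : 0 < p) (h1 : p ≤ 1) (m : ℕ) :
    symmGeometricMeasure h0 h1 {-(m:ℤ)} = ENNReal.ofReal (p * (1-p)^m / (2-p)) := by
  have hq0 : 0 ≤ 1 - p := by linarith
  have hq1 : 1 - p < 1 := by linarith
  have : IsProbabilityMeasure (geometricMeasure ⟨p, h0.le, h1⟩) := inferInstance
  rw [symmGeometricMeasure, Measure.map_apply meas_f (measurableSet_singleton _),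
    Measure.prod_apply (meas_f (measurableSet_singleton _))]
  have hslice : ∀ a : ℕ, (Prod.mk a ⁻¹' ((fun x : ℕ × ℕ => (x.1 : ℤ) - (x.2 : ℤ)) ⁻¹' {-(m:ℤ)}))
      = {a + m} := by
    intro a
    ext b
    simp only [Set.mem_preimage, Set.mem_singleton_iff]
    omega
  simp_rw [hslice]
  rw [lintegral_countable']
  have : ∀ a : ℕ, geometricMeasure ⟨p, h0.le, h1⟩ {a + m} * geometricMeasure ⟨p, h0.le, h1⟩ {a}
      = ENNReal.ofReal (((1-p)^m * p^2) * ((1-p)^2)^a) := by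
    intro a
    rw [geom_singleton h0 h1, geom_singleton h0 h1, ← ENNReal.ofReal_mul (by positivity)]
    congr 1
    rw [← pow_mul]
    ring
  simp_rw [this]
  rw [tsum_ofReal_geom (by positivity) (by positivity) (by nlinarith)]
  congr 1
  have h2 : 1 - (1-p)^2 = p * (2 - p) := by ring
  rw [h2]
  have hp2 : (2:ℝ) - p ≠ 0 := by linarith
  field_simp

lemma symmGeom_singleton (h0 : 0 < p) (h1 : p ≤ 1) (k : ℤ) :
    symmGeometricMeasure h0 h1 {k} = ENNReal.ofReal (p * (1-p)^(k.natAbs) / (2-p)) := by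
  have : IsProbabilityMeasure (geometricMeasure ⟨p, h0.le, h1⟩) := inferInstance
  rcases Int.natAbs_eq k with h | h
  · -- k = natAbs: use symmetry
    have hsym : symmGeometricMeasure h0 h1 {k} = symmGeometricMeasure h0 h1 {-k} := by
      rw [symmGeometricMeasure, Measure.map_apply meas_f (measurableSet_singleton _),
        Measure.map_apply meas_f (measurableSet_singleton _)]
      have hset : ((fun x : ℕ × ℕ => (x.1 : ℤ) - (x.2 : ℤ)) ⁻¹' {k})
          = Prod.swap ⁻¹' ((fun x : ℕ × ℕ => (x.1 : ℤ) - (x.2 : ℤ)) ⁻¹' {-k}) := by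
        ext x
        simp only [Set.mem_preimage, Set.mem_singleton_iff, Prod.fst_swap, Prod.snd_swap]
        omega
      rw [hset, ← Measure.map_apply measurable_swap
          (meas_f (measurableSet_singleton _)), Measure.prod_swap]
    rw [hsym, show -k = -(k.natAbs:ℤ) by omega, symmGeom_singleton_neg]
  · rw [h, symmGeom_singleton_neg]
    rw [show (-(k.natAbs:ℤ)).natAbs = k.natAbs by omega]

lemma symmGeom_prob (h0 : 0 < p) (h1 : p ≤ 1) :
    IsProbabilityMeasure (symmGeometricMeasure h0 h1) := by
  have : IsProbabilityMeasure (geometricMeasure ⟨p, h0.le, h1⟩) := inferInstance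
  rw [symmGeometricMeasure]
  exact Measure.isProbabilityMeasure_map meas_f.aemeasurable

lemma symmGeom_interval (h0 : 0 < p) (h1 : p ≤ 1) (n : ℕ) :
    (symmGeometricMeasure h0 h1 {k : ℤ | |k| ≤ (n:ℤ)}).toReal
      = 1 - 2*(1-p)^(n+1)/(2-p) := by
  have hprob := symmGeom_prob h0 h1
  have h2p : (0:ℝ) < 2 - p := by linarith
  have hq0 : 0 ≤ 1 - p := by linarith
  induction n with
  | zero =>
    have hs : {k : ℤ | |k| ≤ ((0:ℕ):ℤ)} = {(0:ℤ)} := by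
      ext k; simp only [Set.mem_setOf_eq, Set.mem_singleton_iff, abs_le]; omega
    rw [hs, symmGeom_singleton h0 h1 0, ENNReal.toReal_ofReal (by positivity)]
    field_simp
    ring
  | succ n ih =>
    have hsplit : {k : ℤ | |k| ≤ ((n+1:ℕ):ℤ)}
        = {k : ℤ | |k| ≤ (n:ℤ)} ∪ ({(((n:ℤ))+1)} ∪ {(-((n:ℤ)+1))}) := by
      ext k
      simp only [Set.mem_setOf_eq, Set.mem_union, Set.mem_singleton_iff, abs_le]
      omega
    have hd1 : Disjoint {k : ℤ | |k| ≤ (n:ℤ)} ({(((n:ℤ))+1)} ∪ {(-((n:ℤ)+1))}) := by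
      rw [Set.disjoint_left]
      intro k hk hk2
      simp only [Set.mem_setOf_eq, abs_le] at hk
      simp only [Set.mem_union, Set.mem_singleton_iff] at hk2
      omega
    have hd2 : Disjoint ({(((n:ℤ))+1)} : Set ℤ) {(-((n:ℤ)+1))} := by
      rw [Set.disjoint_left]
      intro k hk hk2
      simp only [Set.mem_singleton_iff] at hk hk2
      omega
    rw [hsplit, measure_union hd1 trivial, measure_union hd2 trivial,
      symmGeom_singleton h0 h1, symmGeom_singleton h0 h1,
      ENNReal.toReal_add (measure_ne_top _ _) (by
        exact ENNReal.add_ne_top.mpr ⟨ENNReal.ofReal_ne_top, ENNReal.ofReal_ne_top⟩),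
      ENNReal.toReal_add ENNReal.ofReal_ne_top ENNReal.ofReal_ne_top, ih,
      ENNReal.toReal_ofReal (by positivity), ENNReal.toReal_ofReal (by positivity)]
    have e1 : ((n:ℤ)+1).natAbs = n + 1 := by omega
    have e2 : (-((n:ℤ)+1)).natAbs = n + 1 := by omega
    rw [e1, e2]
    field_simp
    ring

lemma sqrt3_facts : (Real.sqrt 3)^2 = 3 ∧ 1 < Real.sqrt 3 ∧ Real.sqrt 3 < 9/5 := by
  have h := Real.sq_sqrt (show (0:ℝ) ≤ 3 by norm_num)
  have h0 := Real.sqrt_nonneg 3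
  exact ⟨h, by nlinarith, by nlinarith⟩

lemma key_ineq_abstract {q s r : ℝ} (n : ℕ) (hq0 : 0 < q) (hq1 : q < 1)
    (hr2 : r^2 = 3) (hr1 : 1 < r) (hr5 : r < 9/5)
    (hs0 : 0 ≤ s) (hs2 : s^2 = 2*q) (hs : s ≤ ((n:ℝ)+1)*(1-q)) :
    2*q^(n+1)/(1+q) ≤ 1 - r/3 := by
  have h2p : (0:ℝ) < 1 + q := by linarith
  have hs2' : s^2 < 2 := by rw [hs2]; linarith
  have hs32 : s < 3/2 := by nlinarith
  by_cases hc : q ≤ 2 - r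
  · have hpow : q^(n+1) ≤ q := by
      calc q^(n+1) ≤ q^1 := pow_le_pow_of_le_one hq0.le hq1.le (by omega)
      _ = q := pow_one q
    rw [div_le_iff₀ h2p]
    nlinarith [hpow, mul_nonneg (show (0:ℝ) ≤ 2-r-q by linarith)
      (show (0:ℝ) ≤ 1+r/3 by linarith)]
  · push_neg at hc
    have hsr : r - 1 < s := by nlinarith
    have hD0 : 0 < q + (n:ℝ)*(1-q) := by
      have hn0 : (0:ℝ) ≤ (n:ℝ)*(1-q) := mul_nonneg (Nat.cast_nonneg n) (by linarith)
      linarith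
    have hbern : q^n * (q + (n:ℝ)*(1-q)) ≤ q := by
      have hx : (0:ℝ) ≤ (1-q)/q := div_nonneg (by linarith) hq0.le
      have hb := one_add_mul_le_pow (show (-2:ℝ) ≤ (1-q)/q by linarith) n
      have he : 1 + (1-q)/q = 1/q := by field_simp; ring
      have he2 : 1 + (n:ℝ) * ((1-q)/q) = (q + (n:ℝ)*(1-q))/q := by field_simp
      rw [he, he2] at hb
      have hqn : 0 < q^n := pow_pos hq0 n
      have hmul : q^n * ((q + (n:ℝ)*(1-q))/q) ≤ q^n * (1/q)^n :=
        mul_le_mul_of_nonneg_left hb hqn.le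
      have hone : q^n * (1/q)^n = 1 := by
        rw [← mul_pow, mul_one_div, div_self hq0.ne', one_pow]
      rw [hone] at hmul
      calc q^n * (q + (n:ℝ)*(1-q)) = (q^n * ((q + (n:ℝ)*(1-q))/q)) * q := by
            field_simp
        _ ≤ 1 * q := mul_le_mul_of_nonneg_right hmul hq0.le
        _ = q := one_mul q
    have hDl : s^2 + s - 1 ≤ q + (n:ℝ)*(1-q) := by nlinarith
    have hDpos : 0 < s^2 + s - 1 := by nlinarith
    have hq_pow : q^(n+1) * (s^2+s-1) ≤ q * q := by
      have h4 : q^n * (s^2+s-1) ≤ q^n * (q + (n:ℝ)*(1-q)) :=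
        mul_le_mul_of_nonneg_left hDl (pow_pos hq0 n).le
      calc q^(n+1) * (s^2+s-1) = q * (q^n * (s^2+s-1)) := by ring
        _ ≤ q * (q^n * (q + (n:ℝ)*(1-q))) := mul_le_mul_of_nonneg_left h4 hq0.le
        _ = q^n * (q + (n:ℝ)*(1-q)) * q := by ring
        _ ≤ q * q := mul_le_mul_of_nonneg_right hbern hq0.le
    have hA : 0 ≤ r*s*(2 - s^2) :=
      mul_nonneg (mul_nonneg (by linarith) hs0) (by linarith)
    have hB : 0 ≤ (3*r-3)*(3/2 - s) := mul_nonneg (by linarith) (by linarith)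
    have hQ : 0 < -r*s^3 + (3-r)*s + 2*r := by nlinarith [hA, hB]
    have hSQ := mul_pos (show (0:ℝ) < s - r + 1 by linarith) hQ
    have hid2 : (3-r)*(s^2+s-1)*(2+s^2) - 3*s^4
        = (s-r+1)*(-r*s^3+(3-r)*s+2*r) := by
      linear_combination (-(s^3+s-2)) * hr2
    have hpoly : 3*s^4 ≤ (3-r)*(s^2+s-1)*(2+s^2) := by nlinarith [hSQ, hid2]
    rw [div_le_iff₀ h2p]
    have hgoal : 2*(q*q) ≤ (1 - r/3)*(1+q)*(s^2+s-1) := by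
      have hq2 : q = s^2/2 := by linarith
      have e : (1 - r/3)*(1+q)*(s^2+s-1) - 2*(q*q)
          = ((3-r)*(s^2+s-1)*(2+s^2) - 3*s^4)/6 := by rw [hq2]; ring
      linarith [hpoly]
    have h5 : (2*q^(n+1))*(s^2+s-1) ≤ ((1-r/3)*(1+q))*(s^2+s-1) := by
      calc (2*q^(n+1))*(s^2+s-1) = 2*(q^(n+1)*(s^2+s-1)) := by ring
        _ ≤ 2*(q*q) := by linarith
        _ ≤ (1 - r/3)*(1+q)*(s^2+s-1) := hgoal
        _ = ((1-r/3)*(1+q))*(s^2+s-1) := by ring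
    exact le_of_mul_le_mul_right h5 hDpos

/-- Core analytic inequality. -/
lemma key_ineq_s10 {p : ℝ} (h0 : 0 < p) (h1 : p < 1) (n : ℕ)
    (h : Real.sqrt (2*(1-p)) ≤ ((n:ℝ)+1)*p) :
    2*(1-p)^(n+1)/(2-p) ≤ 1 - Real.sqrt 3 / 3 := by
  obtain ⟨hr2, hr1, hr5⟩ := sqrt3_facts
  have h2 : (2:ℝ) - p = 1 + (1-p) := by ring
  rw [h2]
  exact key_ineq_abstract n (by linarith) (by linarith) hr2 hr1 hr5
    (Real.sqrt_nonneg _) (Real.sq_sqrt (by linarith)) (by simpa using h)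

lemma sqrt_ratio (h0 : 0 < p) (h1 : p < 1) :
    Real.sqrt (2*(1-p)/p^2) = Real.sqrt (2*(1-p))/p := by
  rw [Real.sqrt_div (by linarith : (0:ℝ) ≤ 2*(1-p)), Real.sqrt_sq h0.le]

lemma set_le_eq (t : ℝ) : {k : ℤ | |(k:ℝ)| ≤ t} = {k : ℤ | |k| ≤ ⌊t⌋} := by
  ext k
  simp only [Set.mem_setOf_eq]
  rw [← Int.cast_abs]
  exact (Int.le_floor).symm

lemma set_lt_eq (t : ℝ) : {k : ℤ | |(k:ℝ)| < t} = {k : ℤ | |k| ≤ ⌈t⌉ - 1} := by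
  ext k
  simp only [Set.mem_setOf_eq]
  rw [← Int.cast_abs, ← Int.lt_ceil]
  omega

/-- value of the ≤ version, general p -/
lemma val_le (h0 : 0 < p) (h1 : p < 1) :
    ∃ n : ℕ, (symmGeometricMeasure h0 h1.le
        {k : ℤ | |(k:ℝ)| ≤ Real.sqrt (2*(1-p)/p^2)}).toReal
          = 1 - 2*(1-p)^(n+1)/(2-p) ∧
      Real.sqrt (2*(1-p)) ≤ ((n:ℝ)+1)*p := by
  set t := Real.sqrt (2*(1-p)/p^2) with htdef
  have ht0 : 0 ≤ t := Real.sqrt_nonneg _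
  have hfl0 : 0 ≤ ⌊t⌋ := Int.floor_nonneg.mpr ht0
  have hc : ((⌊t⌋.toNat : ℕ) : ℤ) = ⌊t⌋ := Int.toNat_of_nonneg hfl0
  have hcR : ((⌊t⌋.toNat : ℕ) : ℝ) = ((⌊t⌋ : ℤ) : ℝ) := by exact_mod_cast hc
  have hs : Real.sqrt (2*(1-p)) = t * p := by
    rw [htdef, sqrt_ratio h0 h1]; field_simp
  refine ⟨⌊t⌋.toNat, ?_, ?_⟩
  · rw [set_le_eq, ← hc, symmGeom_interval h0 h1.le]
    congr 2
  · have hlt : t < ((⌊t⌋ : ℤ) : ℝ) + 1 := Int.lt_floor_add_one t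
    rw [hs, hcR]
    nlinarith [Int.lt_floor_add_one t]

/-- value of the < version, general p -/
lemma val_lt (h0 : 0 < p) (h1 : p < 1) :
    ∃ n : ℕ, (symmGeometricMeasure h0 h1.le
        {k : ℤ | |(k:ℝ)| < Real.sqrt (2*(1-p)/p^2)}).toReal
          = 1 - 2*(1-p)^(n+1)/(2-p) ∧
      Real.sqrt (2*(1-p)) ≤ ((n:ℝ)+1)*p := by
  set t := Real.sqrt (2*(1-p)/p^2) with htdef
  have ht0 : 0 < t := Real.sqrt_pos.mpr (div_pos (by linarith) (by positivity))
  have hcl : 1 ≤ ⌈t⌉ := by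
    have h4 : (0:ℤ) < ⌈t⌉ := Int.lt_ceil.mpr (by exact_mod_cast ht0)
    omega
  have hc : (((⌈t⌉-1).toNat : ℕ) : ℤ) = ⌈t⌉ - 1 := Int.toNat_of_nonneg (by omega)
  have hcR : (((⌈t⌉-1).toNat : ℕ) : ℝ) = ((⌈t⌉ : ℤ) : ℝ) - 1 := by
    have : ((((⌈t⌉-1).toNat : ℕ) : ℤ) : ℝ) = ((⌈t⌉ - 1 : ℤ) : ℝ) := by exact_mod_cast hc
    push_cast at this
    push_cast
    linarith
  have hs : Real.sqrt (2*(1-p)) = t * p := by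
    rw [htdef, sqrt_ratio h0 h1]; field_simp
  refine ⟨(⌈t⌉-1).toNat, ?_, ?_⟩
  · rw [set_lt_eq, ← hc, symmGeom_interval h0 h1.le]
    congr 2
  · rw [hs, hcR]
    have := Int.le_ceil t
    nlinarith [Int.le_ceil t]

lemma val_p0_lt1 (h0 : 0 < Real.sqrt 3 - 1) (h1 : Real.sqrt 3 - 1 ≤ 1) :
    (symmGeometricMeasure h0 h1 {k : ℤ | |(k:ℝ)| < 1}).toReal = Real.sqrt 3 / 3 := by
  obtain ⟨hr2, hr1, hr5⟩ := sqrt3_facts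
  have hset : {k : ℤ | |(k:ℝ)| < 1} = {k : ℤ | |k| ≤ ((0:ℕ):ℤ)} := by
    rw [set_lt_eq]
    norm_num
  rw [hset, symmGeom_interval h0 h1 0]
  have h3 : (2:ℝ) - (Real.sqrt 3 - 1) ≠ 0 := by nlinarith
  rw [pow_one]
  field_simp
  linear_combination hr2

lemma elem_small (ε : ℝ) (hε : 0 < ε) :
    ∃ (p : ℝ) (h0 : 0 < p) (h1 : p < 1),
      (symmGeometricMeasure h0 h1.le
        {k : ℤ | |(k:ℝ)| ≤ Real.sqrt (2*(1-p)/p^2)}).toReal < Real.sqrt 3 / 3 + ε := by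
  obtain ⟨hr2, hr1, hr5⟩ := sqrt3_facts
  set δ := min (ε/2) ((2 - Real.sqrt 3)/2) with hδdef
  have hδ0 : 0 < δ := lt_min (by linarith) (by nlinarith)
  have hδ1 : δ ≤ ε/2 := min_le_left _ _
  have hδ2 : δ ≤ (2 - Real.sqrt 3)/2 := min_le_right _ _
  set p := Real.sqrt 3 - 1 + δ with hpdef
  have h0 : 0 < p := by simp only [hpdef]; nlinarith
  have h1 : p < 1 := by simp only [hpdef]; nlinarith
  refine ⟨p, h0, h1, ?_⟩
  have hq : 2*(1-p)/p^2 < 1 := by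
    rw [div_lt_one (by positivity)]
    simp only [hpdef]
    nlinarith
  have hqnn : 0 ≤ 2*(1-p)/p^2 := div_nonneg (by simp only [hpdef]; nlinarith) (by positivity)
  have ht1 : Real.sqrt (2*(1-p)/p^2) < 1 := by
    calc Real.sqrt (2*(1-p)/p^2) < Real.sqrt 1 := Real.sqrt_lt_sqrt hqnn hq
      _ = 1 := Real.sqrt_one
  have ht0 : 0 ≤ Real.sqrt (2*(1-p)/p^2) := Real.sqrt_nonneg _
  have hfl : ⌊Real.sqrt (2*(1-p)/p^2)⌋ = 0 := by
    rw [Int.floor_eq_zero_iff]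
    exact ⟨ht0, ht1⟩
  rw [set_le_eq, hfl, show ((0:ℤ)) = ((0:ℕ):ℤ) by norm_num, symmGeom_interval h0 h1.le 0,
    pow_one]
  have h2p : (0:ℝ) < 2 - p := by linarith
  have key : 1 - 2*(1-p)/(2-p) = p/(2-p) := by field_simp; ring
  rw [key, div_lt_iff₀ h2p]
  have hB : (1:ℝ) ≤ 3 - Real.sqrt 3 - δ := by linarith
  have hC : ε * 1 ≤ ε * (3 - Real.sqrt 3 - δ) := mul_le_mul_of_nonneg_left hB hε.le
  have hD : δ * Real.sqrt 3 ≤ δ * (9/5) := mul_le_mul_of_nonneg_left hr5.le hδ0.le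
  simp only [hpdef]
  nlinarith [hC, hD]

theorem symm_geometric_inf_concentration :
    sInf {r : ℝ | ∃ (p : ℝ) (h0 : 0 < p) (h1 : p < 1),
        r = (symmGeometricMeasure h0 h1.le
          {k : ℤ | |(k : ℝ)| ≤ Real.sqrt (2 * (1 - p) / p ^ 2)}).toReal} =
      Real.sqrt 3 / 3 ∧
    sInf {r : ℝ | ∃ (p : ℝ) (h0 : 0 < p) (h1 : p < 1),
        r = (symmGeometricMeasure h0 h1.le
          {k : ℤ | |(k : ℝ)| < Real.sqrt (2 * (1 - p) / p ^ 2)}).toReal} =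
      Real.sqrt 3 / 3 ∧
    (symmGeometricMeasure
        (show (0 : ℝ) < Real.sqrt 3 - 1 by
          nlinarith [Real.sq_sqrt (show (0:ℝ) ≤ 3 by norm_num), Real.sqrt_nonneg 3])
        (show Real.sqrt 3 - 1 ≤ 1 by
          nlinarith [Real.sq_sqrt (show (0:ℝ) ≤ 3 by norm_num), Real.sqrt_nonneg 3])
        {k : ℤ | |(k : ℝ)| < 1}).toReal = Real.sqrt 3 / 3 := by
  obtain ⟨hr2, hr1, hr5⟩ := sqrt3_facts
  have lb1 : ∀ r ∈ {r : ℝ | ∃ (p : ℝ) (h0 : 0 < p) (h1 : p < 1),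
      r = (symmGeometricMeasure h0 h1.le
        {k : ℤ | |(k : ℝ)| ≤ Real.sqrt (2 * (1 - p) / p ^ 2)}).toReal},
      Real.sqrt 3 / 3 ≤ r := by
    rintro r ⟨p, h0, h1, rfl⟩
    obtain ⟨n, hval, hcond⟩ := val_le h0 h1
    rw [hval]
    have := key_ineq_s10 h0 h1 n hcond
    linarith
  have lb2 : ∀ r ∈ {r : ℝ | ∃ (p : ℝ) (h0 : 0 < p) (h1 : p < 1),
      r = (symmGeometricMeasure h0 h1.le
        {k : ℤ | |(k : ℝ)| < Real.sqrt (2 * (1 - p) / p ^ 2)}).toReal},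
      Real.sqrt 3 / 3 ≤ r := by
    rintro r ⟨p, h0, h1, rfl⟩
    obtain ⟨n, hval, hcond⟩ := val_lt h0 h1
    rw [hval]
    have := key_ineq_s10 h0 h1 n hcond
    linarith
  have hp0 : 0 < Real.sqrt 3 - 1 := by nlinarith
  have hp1 : Real.sqrt 3 - 1 < 1 := by nlinarith
  have hsqrt1 : Real.sqrt (2 * (1 - (Real.sqrt 3 - 1)) / (Real.sqrt 3 - 1) ^ 2) = 1 := by
    have hne : ((Real.sqrt 3:ℝ) - 1)^2 ≠ 0 := pow_ne_zero 2 (ne_of_gt hp0)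
    have harg : 2 * (1 - (Real.sqrt 3 - 1)) / (Real.sqrt 3 - 1) ^ 2 = 1 := by
      rw [div_eq_one_iff_eq hne]
      linear_combination -hr2
    rw [harg, Real.sqrt_one]
  have hmem2 : Real.sqrt 3 / 3 ∈ {r : ℝ | ∃ (p : ℝ) (h0 : 0 < p) (h1 : p < 1),
      r = (symmGeometricMeasure h0 h1.le
        {k : ℤ | |(k : ℝ)| < Real.sqrt (2 * (1 - p) / p ^ 2)}).toReal} := by
    refine ⟨Real.sqrt 3 - 1, hp0, hp1, ?_⟩
    rw [hsqrt1]
    exact (val_p0_lt1 hp0 hp1.le).symm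
  have bdd1 : BddBelow {r : ℝ | ∃ (p : ℝ) (h0 : 0 < p) (h1 : p < 1),
      r = (symmGeometricMeasure h0 h1.le
        {k : ℤ | |(k : ℝ)| ≤ Real.sqrt (2 * (1 - p) / p ^ 2)}).toReal} :=
    ⟨Real.sqrt 3 / 3, lb1⟩
  have bdd2 : BddBelow {r : ℝ | ∃ (p : ℝ) (h0 : 0 < p) (h1 : p < 1),
      r = (symmGeometricMeasure h0 h1.le
        {k : ℤ | |(k : ℝ)| < Real.sqrt (2 * (1 - p) / p ^ 2)}).toReal} :=
    ⟨Real.sqrt 3 / 3, lb2⟩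
  refine ⟨le_antisymm ?_ ?_, le_antisymm (csInf_le bdd2 hmem2) (le_csInf ⟨_, hmem2⟩ lb2),
    val_p0_lt1 _ _⟩
  · apply le_of_forall_pos_le_add
    intro ε hε
    obtain ⟨p, h0, h1, hlt⟩ := elem_small ε hε
    exact le_trans (csInf_le bdd1 ⟨p, h0, h1, rfl⟩) hlt.le
  · obtain ⟨p, h0, h1, hlt⟩ := elem_small 1 (by norm_num)
    exact le_csInf ⟨_, ⟨p, h0, h1, rfl⟩⟩ lb1
end

section
/- Let P_{𝓘₀} = inf over all infinitely divisible real random variables X with E[X²] < ∞ and Var(X) > 0 of P{|X − E[X]| < √(Var(X))}. Then P_{𝓘₀} ≤ e^{−1}. -/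
open MeasureTheory Real

open ProbabilityTheory
open scoped NNReal Nat ENNReal

namespace PoissonAux

lemma pois_meas_singleton (r : ℝ≥0) (k : ℕ) :
    poissonMeasure r {k} = ENNReal.ofReal (poissonPMFReal r k) := by
  rw [poissonMeasure_singleton]
  rfl

/-- Convolution of Poisson measures on `ℕ`. -/
lemma pois_conv (a b : ℝ≥0) :
    (poissonMeasure a).conv (poissonMeasure b) = poissonMeasure (a + b) := by
  refine Measure.ext_of_singleton fun k => ?_
  rw [Measure.conv, Measure.map_apply (by fun_prop) (measurableSet_singleton k),
    Measure.prod_apply (measurable_add (measurableSet_singleton k)),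
    lintegral_countable']
  have hslice : ∀ m : ℕ, (poissonMeasure b) (Prod.mk m ⁻¹' ((fun x : ℕ × ℕ => x.1 + x.2) ⁻¹' {k}))
      = if m ≤ k then ENNReal.ofReal (poissonPMFReal b (k - m)) else 0 := by
    intro m
    split_ifs with h
    · have : (Prod.mk m ⁻¹' ((fun x : ℕ × ℕ => x.1 + x.2) ⁻¹' {k})) = {k - m} := by
        ext n; simp [Set.mem_preimage]; omega
      rw [this, pois_meas_singleton]
    · have : (Prod.mk m ⁻¹' ((fun x : ℕ × ℕ => x.1 + x.2) ⁻¹' {k})) = ∅ := by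
        ext n; simp [Set.mem_preimage]; omega
      rw [this, measure_empty]
  simp_rw [hslice, pois_meas_singleton]
  rw [tsum_eq_sum (s := Finset.range (k+1)) (by
    intro m hm
    rw [if_neg (by simpa using fun h => hm (Finset.mem_range.mpr (Nat.lt_succ_of_le h)))]
    simp)]
  have : ∀ m ∈ Finset.range (k+1),
      (if m ≤ k then ENNReal.ofReal (poissonPMFReal b (k - m)) else 0) *
        ENNReal.ofReal (poissonPMFReal a m)
      = ENNReal.ofReal (poissonPMFReal a m * poissonPMFReal b (k - m)) := by
    intro m hm
    rw [if_pos (Nat.lt_succ_iff.mp (Finset.mem_range.mp hm)),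
      ENNReal.ofReal_mul poissonPMFReal_nonneg, mul_comm]
  rw [Finset.sum_congr rfl this, ← ENNReal.ofReal_sum_of_nonneg
    (fun m _ => mul_nonneg poissonPMFReal_nonneg poissonPMFReal_nonneg)]
  congr 1
  unfold poissonPMFReal
  push_cast
  rw [add_pow, Finset.mul_sum, Finset.sum_div]
  refine Finset.sum_congr rfl fun m hm => ?_
  have hmk : m ≤ k := Nat.lt_succ_iff.mp (Finset.mem_range.mp hm)
  rw [Nat.cast_choose ℝ hmk, neg_add, Real.exp_add]
  have h1 : (Nat.factorial m : ℝ) ≠ 0 := Nat.cast_ne_zero.mpr (Nat.factorial_ne_zero m)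
  have h2 : (Nat.factorial (k-m) : ℝ) ≠ 0 := Nat.cast_ne_zero.mpr (Nat.factorial_ne_zero _)
  have h3 : (Nat.factorial k : ℝ) ≠ 0 := Nat.cast_ne_zero.mpr (Nat.factorial_ne_zero k)
  field_simp

/-- The Poisson measure pushed forward to `ℝ`. -/
noncomputable def M (r : ℝ≥0) : Measure ℝ := (poissonMeasure r).map (Nat.cast : ℕ → ℝ)

lemma meas_cast : Measurable (Nat.cast : ℕ → ℝ) := measurable_from_top

instance (r : ℝ≥0) : IsProbabilityMeasure (M r) :=
  Measure.isProbabilityMeasure_map meas_cast.aemeasurable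

lemma M_conv (a b : ℝ≥0) : (M a).conv (M b) = M (a + b) := by
  rw [M, M, Measure.conv, Measure.map_prod_map _ _ meas_cast meas_cast,
    Measure.map_map (by fun_prop) (by fun_prop)]
  have : ((fun x : ℝ × ℝ => x.1 + x.2) ∘ Prod.map (Nat.cast : ℕ → ℝ) Nat.cast)
      = (Nat.cast : ℕ → ℝ) ∘ (fun x : ℕ × ℕ => x.1 + x.2) := by
    ext x; simp
  rw [this, ← Measure.map_map meas_cast (by fun_prop), ← Measure.conv, pois_conv, M]

lemma M_convPow (s : ℝ≥0) (n : ℕ) : convPow (M s) (n + 1) = M ((n + 1) * s) := by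
  induction n with
  | zero => simp [convPow, Measure.dirac_zero_conv, one_mul]
  | succ n ih =>
    rw [convPow, ih, M_conv]
    congr 1
    push_cast
    ring

lemma S0 : HasSum (fun n : ℕ => rexp (-1) / n !) 1 := by
  have := poissonPMFRealSum 1
  unfold poissonPMFReal at this
  simpa using this

lemma S1 : HasSum (fun n : ℕ => (n : ℝ) * (rexp (-1) / n !)) 1 := by
  refine (hasSum_nat_add_iff' (f := fun n : ℕ => (n : ℝ) * (rexp (-1) / n !)) 1).mp ?_
  simp only [Finset.range_one, Finset.sum_singleton, Nat.cast_zero, zero_mul, sub_zero]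
  have h : (fun n : ℕ => ((n+1 : ℕ) : ℝ) * (rexp (-1) / (n+1)!)) =
      fun n : ℕ => rexp (-1) / n ! := by
    funext n
    have h1 : ((n+1)! : ℝ) = (n+1) * n ! := by rw [Nat.factorial_succ]; push_cast; ring
    have h2 : (n ! : ℝ) ≠ 0 := Nat.cast_ne_zero.mpr (Nat.factorial_ne_zero n)
    push_cast [h1]
    field_simp
  exact h ▸ S0

lemma S2 : HasSum (fun n : ℕ => (n : ℝ)^2 * (rexp (-1) / n !)) 2 := by
  refine (hasSum_nat_add_iff' (f := fun n : ℕ => (n : ℝ)^2 * (rexp (-1) / n !)) 1).mp ?_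
  have h : (fun n : ℕ => ((n+1 : ℕ) : ℝ)^2 * (rexp (-1) / (n+1)!)) =
      fun n : ℕ => (n : ℝ) * (rexp (-1) / n !) + rexp (-1) / n ! := by
    funext n
    have h1 : ((n+1)! : ℝ) = (n+1) * n ! := by rw [Nat.factorial_succ]; push_cast; ring
    have h2 : (n ! : ℝ) ≠ 0 := Nat.cast_ne_zero.mpr (Nat.factorial_ne_zero n)
    push_cast [h1]
    field_simp
  have h2 : HasSum (fun n : ℕ => (n : ℝ) * (rexp (-1) / n !) + rexp (-1) / n !) 2 := by
    have := S1.add S0; norm_num at this; exact this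
  rw [h]
  have e : (2:ℝ) - ∑ i ∈ Finset.range 1, (i:ℝ)^2 * (rexp (-1) / i !) = 2 := by norm_num
  rw [e]
  exact h2

lemma Svar : HasSum (fun n : ℕ => ((n : ℝ) - 1)^2 * (rexp (-1) / n !)) 1 := by
  have h := (S2.sub (S1.mul_left 2)).add S0
  norm_num at h
  convert h using 2 with n
  · rfl
  ring

lemma pois1_pmf (n : ℕ) : poissonPMFReal 1 n = rexp (-1) / n ! := by
  unfold poissonPMFReal; simp

lemma pois1_singleton (n : ℕ) :
    poissonMeasure 1 {n} = ENNReal.ofReal (rexp (-1) / n !) := by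
  rw [pois_meas_singleton, pois1_pmf]

lemma pois1_nonneg (n : ℕ) : 0 ≤ rexp (-1) / n ! := by positivity

lemma pois_integrable (f : ℕ → ℝ)
    (h : Summable fun n => |f n| * (rexp (-1) / n !)) :
    Integrable f (poissonMeasure 1) := by
  refine ⟨(measurable_from_top (f := f)).aestronglyMeasurable, ?_⟩
  rw [HasFiniteIntegral, lintegral_countable']
  have : ∀ n : ℕ, ‖f n‖ₑ * poissonMeasure 1 {n}
      = ENNReal.ofReal (|f n| * (rexp (-1) / n !)) := by
    intro n
    rw [pois1_singleton, ENNReal.ofReal_mul (abs_nonneg _), ← Real.enorm_eq_ofReal_abs]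
  simp_rw [this]
  rw [← ENNReal.ofReal_tsum_of_nonneg (fun n => mul_nonneg (abs_nonneg _) (pois1_nonneg n)) h]
  exact ENNReal.ofReal_lt_top

lemma pois_integral (f : ℕ → ℝ) {S : ℝ}
    (h : HasSum (fun n => f n * (rexp (-1) / n !)) S)
    (hi : Integrable f (poissonMeasure 1)) :
    ∫ n, f n ∂(poissonMeasure 1) = S := by
  rw [integral_poissonMeasure]
  have : ∀ n : ℕ, (rexp (-↑(1:ℝ≥0)) * ↑(1:ℝ≥0) ^ n / ↑n !) • f n = f n * (rexp (-1) / n !) := by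
    intro n
    rw [← poissonPMFReal, pois1_pmf, smul_eq_mul, mul_comm]
  simp_rw [this]
  exact h.tsum_eq

lemma M1_mean : distMean (M 1) = 1 := by
  rw [distMean, M, integral_map (f := fun x : ℝ => x) meas_cast.aemeasurable measurable_id'.aestronglyMeasurable]
  exact pois_integral _ S1 (pois_integrable _ (S1.summable.congr fun n => by
    rw [abs_of_nonneg (Nat.cast_nonneg n)]))

lemma M1_var : distVar (M 1) = 1 := by
  rw [distVar, M1_mean, M,
    integral_map meas_cast.aemeasurable (by measurability)]
  exact pois_integral _ Svar (pois_integrable _ (Svar.summable.congr fun n => by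
    rw [abs_of_nonneg (sq_nonneg _)]))

lemma M1_sq_integrable : Integrable (fun x : ℝ => x ^ 2) (M 1) := by
  rw [M, integrable_map_measure (by fun_prop) meas_cast.aemeasurable]
  exact pois_integrable _ (S2.summable.congr fun n => by
    rw [abs_of_nonneg (sq_nonneg _)]; norm_num)

lemma M1_event : (M 1) {x : ℝ | |x - 1| < 1} = ENNReal.ofReal (rexp (-1)) := by
  have hset : {x : ℝ | |x - 1| < 1} = Set.Ioo 0 2 := by
    ext x
    rw [Set.mem_setOf_eq, abs_lt, Set.mem_Ioo]
    constructor <;> rintro ⟨h1, h2⟩ <;> constructor <;> linarith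
  rw [M, Measure.map_apply meas_cast (hset ▸ measurableSet_Ioo)]
  have hpre : (Nat.cast : ℕ → ℝ) ⁻¹' {x : ℝ | |x - 1| < 1} = {1} := by
    ext n
    rw [Set.mem_preimage, hset, Set.mem_Ioo, Set.mem_singleton_iff]
    constructor
    · rintro ⟨h1, h2⟩
      have : 0 < n := by exact_mod_cast h1
      have : n < 2 := by exact_mod_cast h2
      omega
    · rintro rfl; norm_num
  rw [hpre, pois1_singleton]
  norm_num

end PoissonAux

theorem PI0_le_exp_neg_one :
    sInf {r : ℝ | ∃ μ : Measure ℝ, IsProbabilityMeasure μ ∧ InfinitelyDivisible μ ∧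
      Integrable (fun x => x ^ 2) μ ∧ 0 < distVar μ ∧
      r = (μ {x : ℝ | |x - distMean μ| < Real.sqrt (distVar μ)}).toReal} ≤
      Real.exp (-1) := by
  open PoissonAux in
  refine csInf_le ⟨0, ?_⟩ ?_
  · rintro r ⟨μ, _, _, _, _, rfl⟩
    exact ENNReal.toReal_nonneg
  · refine ⟨M 1, inferInstance, ?_, M1_sq_integrable, by rw [M1_var]; norm_num, ?_⟩
    · intro n hn
      refine ⟨M ((n : ℝ≥0)⁻¹), inferInstance, ?_⟩
      obtain ⟨m, rfl⟩ := Nat.exists_eq_add_of_lt hn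
      rw [zero_add, M_convPow]
      congr 1
      push_cast
      rw [mul_inv_cancel₀ (by positivity)]
    · rw [M1_mean, M1_var, Real.sqrt_one, M1_event,
        ENNReal.toReal_ofReal (Real.exp_nonneg _)]
end

section
/- Let P_𝓘 = inf over all infinitely divisible real random variables X with E[X²] < ∞ of P{|X − E[X]| ≤ √(Var(X))}. Then P_𝓘 ≤ e^{−1} · ∑_{k=0}^{∞} 1/(2^{2k}(k!)²). -/
open MeasureTheory Real

open ProbabilityTheory Filter Topology
open scoped ENNReal NNReal


section Core
set_option linter.unusedSectionVars false
variable {M : Type*} [AddCommMonoid M] [MeasurableSpace M] [MeasurableAdd₂ M]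
variable {N : Type*} [AddCommMonoid N] [MeasurableSpace N] [MeasurableAdd₂ N]

lemma myconv_def (μ ν : Measure M) : μ.conv ν = (μ.prod ν).map (fun p : M × M => p.1 + p.2) := rfl

lemma map_conv (μ ν : Measure M) [SFinite μ] [SFinite ν] (f : M → N) (hf : Measurable f)
    (hadd : ∀ x y, f (x + y) = f x + f y) :
    (μ.map f).conv (ν.map f) = (μ.conv ν).map f := by
  rw [myconv_def, myconv_def, Measure.map_prod_map _ _ hf hf,
    Measure.map_map measurable_add (hf.prodMap hf), Measure.map_map hf measurable_add]
  congr 1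
  ext p
  simp [Function.comp, hadd]

lemma conv_assoc (μ ν ρ : Measure M) [SFinite μ] [SFinite ν] [SFinite ρ] :
    (μ.conv ν).conv ρ = μ.conv (ν.conv ρ) := by
  have h1 : (μ.conv ν).conv ρ
      = ((μ.prod ν).prod ρ).map (fun q : (M × M) × M => q.1.1 + q.1.2 + q.2) := by
    rw [myconv_def, myconv_def]
    nth_rewrite 1 [show ρ = ρ.map id from (Measure.map_id).symm]
    rw [Measure.map_prod_map _ _ measurable_add measurable_id,
      Measure.map_map measurable_add (measurable_add.prodMap measurable_id)]
    rfl
  have h2 : μ.conv (ν.conv ρ)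
      = ((μ.prod ν).prod ρ).map (fun q : (M × M) × M => q.1.1 + (q.1.2 + q.2)) := by
    rw [myconv_def, myconv_def]
    nth_rewrite 1 [show μ = μ.map id from (Measure.map_id).symm]
    rw [Measure.map_prod_map _ _ measurable_id measurable_add,
      Measure.map_map measurable_add (measurable_id.prodMap measurable_add),
      ← Measure.prodAssoc_prod (μ := μ) (ν := ν) (τ := ρ),
      Measure.map_map
        (((measurable_add.comp (measurable_id.prodMap measurable_add)))) MeasurableEquiv.prodAssoc.measurable]
    rfl
  rw [h1, h2]
  congr 1
  ext q
  exact add_assoc _ _ _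

end Core


lemma measure_finset_eq_sum {α : Type*} [MeasurableSpace α] [MeasurableSingletonClass α]
    (μ : Measure α) (s : Finset α) : μ ↑s = ∑ a ∈ s, μ {a} := by
  have : (↑s : Set α) = ⋃ a ∈ s, {a} := (Set.biUnion_of_singleton (↑s : Set α)).symm
  rw [this, measure_biUnion_finset]
  · exact fun a _ b _ hab => by simp [Set.disjoint_singleton, hab]
  · exact fun b _ => measurableSet_singleton b

lemma P_apply (t : ℝ≥0) (n : ℕ) : poissonMeasure t {n} = ENNReal.ofReal (poissonPMFReal t n) := by
  rw [poissonMeasure_singleton]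
  rfl

lemma poisson_real_add (a b : ℝ≥0) (k : ℕ) :
    ∑ i ∈ Finset.range (k + 1), poissonPMFReal a i * poissonPMFReal b (k - i)
      = poissonPMFReal (a + b) k := by
  unfold poissonPMFReal
  push_cast
  rw [add_pow]
  rw [eq_div_iff (show (Nat.factorial k:ℝ) ≠ 0 from Nat.cast_ne_zero.mpr (Nat.factorial_ne_zero k)), Finset.sum_mul, Finset.mul_sum]
  refine Finset.sum_congr rfl fun i hi => ?_
  have hik : i ≤ k := Nat.lt_succ_iff.mp (Finset.mem_range.mp hi)
  rw [Nat.cast_choose ℝ hik, neg_add, Real.exp_add]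
  have h1 : (Nat.factorial i : ℝ) ≠ 0 := Nat.cast_ne_zero.mpr (Nat.factorial_ne_zero i)
  have h2 : (Nat.factorial (k - i) : ℝ) ≠ 0 := Nat.cast_ne_zero.mpr (Nat.factorial_ne_zero _)
  have h3 : (Nat.factorial k : ℝ) ≠ 0 := Nat.cast_ne_zero.mpr (Nat.factorial_ne_zero k)
  field_simp

lemma poisson_conv (a b : ℝ≥0) :
    (poissonMeasure a).conv (poissonMeasure b) = poissonMeasure (a + b) := by
  apply Measure.ext_of_singleton
  intro k
  rw [myconv_def, Measure.map_apply measurable_add (measurableSet_singleton k)]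
  have hpre : (fun p : ℕ × ℕ => p.1 + p.2) ⁻¹' {k} = ↑(Finset.HasAntidiagonal.antidiagonal k) := by
    ext p; simp [Finset.HasAntidiagonal.mem_antidiagonal]
  rw [hpre, measure_finset_eq_sum]
  have hsingle : ∀ p : ℕ × ℕ, ((poissonMeasure a).prod (poissonMeasure b)) {p}
      = ENNReal.ofReal (poissonPMFReal a p.1 * poissonPMFReal b p.2) := by
    intro p
    rw [show ({p} : Set (ℕ × ℕ)) = {p.1} ×ˢ {p.2} by simp, Measure.prod_prod,
      P_apply, P_apply, ← ENNReal.ofReal_mul poissonPMFReal_nonneg]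
  simp_rw [hsingle]
  rw [P_apply, ← ENNReal.ofReal_sum_of_nonneg
    (fun i _ => mul_nonneg poissonPMFReal_nonneg poissonPMFReal_nonneg)]
  congr 1
  rw [Finset.Nat.sum_antidiagonal_eq_sum_range_succ
    (fun i j => poissonPMFReal a i * poissonPMFReal b j)]
  exact poisson_real_add a b k


noncomputable def pA (t : ℝ≥0) : Measure ℤ := (poissonMeasure t).map (fun n : ℕ => (n : ℤ))
noncomputable def pB (t : ℝ≥0) : Measure ℤ := (poissonMeasure t).map (fun n : ℕ => -(n : ℤ))
noncomputable def skZ (t : ℝ≥0) : Measure ℤ := (pA t).conv (pB t)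
noncomputable def μS (t : ℝ≥0) : Measure ℝ := (skZ t).map (fun z : ℤ => (z : ℝ))

instance (t : ℝ≥0) : IsProbabilityMeasure (pA t) :=
  Measure.isProbabilityMeasure_map (measurable_of_countable _).aemeasurable
instance (t : ℝ≥0) : IsProbabilityMeasure (pB t) :=
  Measure.isProbabilityMeasure_map (measurable_of_countable _).aemeasurable
instance (t : ℝ≥0) : IsProbabilityMeasure (skZ t) := by
  unfold skZ; infer_instance
instance (t : ℝ≥0) : IsProbabilityMeasure (μS t) :=
  Measure.isProbabilityMeasure_map (measurable_of_countable _).aemeasurable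

lemma pA_conv (a b : ℝ≥0) : (pA a).conv (pA b) = pA (a + b) := by
  unfold pA
  rw [map_conv _ _ _ (measurable_of_countable _) (by push_cast; simp), poisson_conv]

lemma pB_conv (a b : ℝ≥0) : (pB a).conv (pB b) = pB (a + b) := by
  unfold pB
  rw [map_conv _ _ _ (measurable_of_countable _) (by intro x y; push_cast; ring), poisson_conv]

lemma skZ_conv (a b : ℝ≥0) : (skZ a).conv (skZ b) = skZ (a + b) := by
  unfold skZ
  rw [conv_assoc, ← conv_assoc (pB a) (pA b) (pB b), Measure.conv_comm (pB a) (pA b),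
    conv_assoc (pA b) (pB a) (pB b), ← conv_assoc (pA a) (pA b), pA_conv, pB_conv]

lemma μS_conv (a b : ℝ≥0) : (μS a).conv (μS b) = μS (a + b) := by
  unfold μS
  rw [map_conv _ _ _ (measurable_of_countable _) (by intro x y; push_cast; ring), skZ_conv]

lemma convPow_μS (s : ℝ≥0) : ∀ k : ℕ, 1 ≤ k → convPow (μS s) k = μS ((k : ℝ≥0) * s) := by
  refine Nat.le_induction ?_ ?_
  · show (Measure.dirac (0:ℝ)).conv (μS s) = _
    rw [MeasureTheory.Measure.dirac_zero_conv]
    norm_num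
  · intro k hk ih
    show (convPow (μS s) k).conv (μS s) = _
    rw [ih, μS_conv]
    congr 1
    push_cast
    ring

lemma μS_infdiv (t : ℝ≥0) : InfinitelyDivisible (μS t) := by
  intro n hn
  refine ⟨μS (t / n), inferInstance, ?_⟩
  rw [convPow_μS _ n hn]
  congr 1
  rw [mul_div_cancel₀]
  exact Nat.cast_ne_zero.mpr hn.ne'


-- HasSum facts for Poisson moments
lemma hasSum_exp_base (t : ℝ≥0) : HasSum (fun n => (t:ℝ)^n / n.factorial) (exp t) := by
  rw [exp_eq_exp_ℝ]
  exact NormedSpace.expSeries_div_hasSum_exp (t:ℝ)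

lemma hasSum_poisson_m1 (t : ℝ≥0) :
    HasSum (fun n : ℕ => (n:ℝ) * (t:ℝ)^n / n.factorial) ((t:ℝ) * exp t) := by
  have h0 : HasSum (fun n : ℕ => (t:ℝ) * ((t:ℝ)^n / n.factorial)) ((t:ℝ) * exp t) :=
    (hasSum_exp_base t).mul_left _
  have he : (fun n : ℕ => ((n+1:ℕ):ℝ) * (t:ℝ)^(n+1) / (n+1).factorial)
      = fun n : ℕ => (t:ℝ) * ((t:ℝ)^n / n.factorial) := by
    funext n
    rw [Nat.factorial_succ]
    have : ((n+1:ℕ):ℝ) ≠ 0 := by positivity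
    push_cast
    field_simp
    ring
  have := (hasSum_nat_add_iff (f := fun n : ℕ => (n:ℝ) * (t:ℝ)^n / n.factorial) 1).mp
    (by rw [show (fun n : ℕ => ((n+1:ℕ):ℝ) * (t:ℝ)^(n+1) / (n+1).factorial) = _ from he] at *; simpa using h0)
  simpa using this

lemma hasSum_poisson_m2aux (t : ℝ≥0) :
    HasSum (fun n : ℕ => (n:ℝ) * ((n:ℝ) - 1) * (t:ℝ)^n / n.factorial) ((t:ℝ)^2 * exp t) := by
  have h0 : HasSum (fun n : ℕ => (t:ℝ)^2 * ((t:ℝ)^n / n.factorial)) ((t:ℝ)^2 * exp t) :=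
    (hasSum_exp_base t).mul_left _
  have he : (fun n : ℕ => ((n+2:ℕ):ℝ) * (((n+2:ℕ):ℝ) - 1) * (t:ℝ)^(n+2) / (n+2).factorial)
      = fun n : ℕ => (t:ℝ)^2 * ((t:ℝ)^n / n.factorial) := by
    funext n
    rw [Nat.factorial_succ, Nat.factorial_succ]
    have h1 : ((n+1:ℕ):ℝ) ≠ 0 := by positivity
    have h2 : ((n+2:ℕ):ℝ) ≠ 0 := by positivity
    push_cast
    field_simp
    ring
  have := (hasSum_nat_add_iff (f := fun n : ℕ => (n:ℝ) * ((n:ℝ)-1) * (t:ℝ)^n / n.factorial) 2).mp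
    (by rw [show (fun n : ℕ => ((n+2:ℕ):ℝ) * (((n+2:ℕ):ℝ)-1) * (t:ℝ)^(n+2) / (n+2).factorial) = _ from he] at *
        simpa using h0)
  simpa [Finset.sum_range_succ] using this

lemma hasSum_poisson_m2 (t : ℝ≥0) :
    HasSum (fun n : ℕ => (n:ℝ)^2 * (t:ℝ)^n / n.factorial) (((t:ℝ) + (t:ℝ)^2) * exp t) := by
  have := (hasSum_poisson_m2aux t).add (hasSum_poisson_m1 t)
  have he : (fun n : ℕ => (n:ℝ) * ((n:ℝ)-1) * (t:ℝ)^n / n.factorial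
      + (n:ℝ) * (t:ℝ)^n / n.factorial) = fun n : ℕ => (n:ℝ)^2 * (t:ℝ)^n / n.factorial := by
    funext n; ring
  rw [he] at this
  convert this using 1
  ring

-- generic integral computation over poissonMeasure
lemma integral_P {t : ℝ≥0} {f : ℕ → ℝ} (hf : ∀ n, 0 ≤ f n) {s : ℝ}
    (h : HasSum (fun n => poissonPMFReal t n * f n) s) :
    Integrable f (poissonMeasure t) ∧ ∫ n, f n ∂(poissonMeasure t) = s := by
  have hPa : ∀ n, poissonMeasure t {n} = ENNReal.ofReal (poissonPMFReal t n) := by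
    intro n
    rw [poissonMeasure_singleton]
    rfl
  have hint : Integrable f (poissonMeasure t) := by
    refine ⟨(measurable_of_countable f).aestronglyMeasurable, ?_⟩
    rw [hasFiniteIntegral_iff_ofReal (Filter.Eventually.of_forall hf), lintegral_countable']
    have : ∀ n : ℕ, ENNReal.ofReal (f n) * poissonMeasure t {n}
        = ENNReal.ofReal (poissonPMFReal t n * f n) := by
      intro n
      rw [hPa n, ← ENNReal.ofReal_mul (hf n), mul_comm]
    rw [tsum_congr this, ← ENNReal.ofReal_tsum_of_nonneg
      (fun n => mul_nonneg poissonPMFReal_nonneg (hf n)) h.summable]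
    exact ENNReal.ofReal_lt_top
  refine ⟨hint, ?_⟩
  rw [integral_countable' hint]
  have : ∀ n : ℕ, (poissonMeasure t {n}).toReal • f n = poissonPMFReal t n * f n := by
    intro n
    rw [hPa n, ENNReal.toReal_ofReal poissonPMFReal_nonneg, smul_eq_mul]
  simp_rw [measureReal_def]
  rw [tsum_congr this, h.tsum_eq]

lemma P_m1 (t : ℝ≥0) : Integrable (fun n : ℕ => (n:ℝ)) (poissonMeasure t)
    ∧ ∫ n : ℕ, (n:ℝ) ∂(poissonMeasure t) = t := by
  have h : HasSum (fun n => poissonPMFReal t n * (n:ℝ)) (t:ℝ) := by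
    have := (hasSum_poisson_m1 t).mul_left (exp (-(t:ℝ)))
    have he : (fun n : ℕ => exp (-(t:ℝ)) * ((n:ℝ) * (t:ℝ)^n / n.factorial))
        = fun n : ℕ => poissonPMFReal t n * (n:ℝ) := by
      funext n; unfold poissonPMFReal; ring
    rw [he] at this
    convert this using 1
    · rfl
    rw [exp_neg]
    field_simp
  exact integral_P (fun n => Nat.cast_nonneg n) h

lemma P_m2 (t : ℝ≥0) : Integrable (fun n : ℕ => (n:ℝ)^2) (poissonMeasure t)
    ∧ ∫ n : ℕ, (n:ℝ)^2 ∂(poissonMeasure t) = t + (t:ℝ)^2 := by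
  have h : HasSum (fun n => poissonPMFReal t n * (n:ℝ)^2) ((t:ℝ) + (t:ℝ)^2) := by
    have := (hasSum_poisson_m2 t).mul_left (exp (-(t:ℝ)))
    have he : (fun n : ℕ => exp (-(t:ℝ)) * ((n:ℝ)^2 * (t:ℝ)^n / n.factorial))
        = fun n : ℕ => poissonPMFReal t n * (n:ℝ)^2 := by
      funext n; unfold poissonPMFReal; ring
    rw [he] at this
    convert this using 1
    · rfl
    rw [exp_neg]
    field_simp
  exact integral_P (fun n => sq_nonneg _) h


lemma skZ_map (t : ℝ≥0) : skZ t
    = ((poissonMeasure t).prod (poissonMeasure t)).map (fun p : ℕ × ℕ => (p.1:ℤ) - p.2) := by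
  unfold skZ pA pB
  rw [show (((poissonMeasure t).map (fun n : ℕ => (n:ℤ)))).conv
      ((poissonMeasure t).map (fun n : ℕ => -(n:ℤ))) = (((poissonMeasure t).map (fun n : ℕ => (n:ℤ))).prod
      ((poissonMeasure t).map (fun n : ℕ => -(n:ℤ)))).map (fun p : ℤ × ℤ => p.1 + p.2) from rfl,
    Measure.map_prod_map _ _ (measurable_of_countable _) (measurable_of_countable _),
    Measure.map_map measurable_add ((measurable_of_countable _).prodMap (measurable_of_countable _))]
  congr 1

lemma μS_map (t : ℝ≥0) : μS t
    = ((poissonMeasure t).prod (poissonMeasure t)).map (fun p : ℕ × ℕ => (p.1:ℝ) - p.2) := by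
  rw [μS, skZ_map, Measure.map_map (measurable_of_countable _) (measurable_of_countable _)]
  congr 1
  funext p
  simp [Function.comp]

lemma μS_mean (t : ℝ≥0) : ∫ x, x ∂(μS t) = 0 := by
  have hswap : ((poissonMeasure t).prod (poissonMeasure t)).map Prod.swap
      = ((poissonMeasure t).prod (poissonMeasure t)) := Measure.prod_swap
  have hneg : (μS t).map (fun x : ℝ => -x) = μS t := by
    rw [μS_map, Measure.map_map (measurable_neg) (measurable_of_countable _)]
    nth_rewrite 2 [← hswap]
    rw [Measure.map_map (measurable_of_countable _) measurable_swap]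
    congr 1
    funext p
    simp [Function.comp]
  have h1 : ∫ x, x ∂(μS t) = ∫ x, x ∂((μS t).map (fun x : ℝ => -x)) := by rw [hneg]
  have h2 : ∫ x, x ∂((μS t).map (fun x : ℝ => -x)) = ∫ x, -x ∂(μS t) :=
    integral_map (f := fun x : ℝ => x) measurable_neg.aemeasurable aestronglyMeasurable_id
  rw [h2, integral_neg] at h1
  linarith [h1]

lemma μS_var (t : ℝ≥0) : Integrable (fun x : ℝ => x^2) (μS t)
    ∧ ∫ x, x^2 ∂(μS t) = 2*t := by
  set Q := (poissonMeasure t).prod (poissonMeasure t) with hQ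
  have hfst : Q.map Prod.fst = poissonMeasure t := by
    rw [hQ, Measure.map_fst_prod]; simp
  have hsnd : Q.map Prod.snd = poissonMeasure t := by
    rw [hQ, Measure.map_snd_prod]; simp
  have i1 : Integrable (fun p : ℕ × ℕ => (p.1:ℝ)^2) Q := by
    have := (integrable_map_measure ((measurable_of_countable (fun n : ℕ => (n:ℝ)^2)).aestronglyMeasurable)
      measurable_fst.aemeasurable).mp (by rw [hfst]; exact (P_m2 t).1)
    exact this
  have i2 : Integrable (fun p : ℕ × ℕ => (p.2:ℝ)^2) Q := by
    have := (integrable_map_measure ((measurable_of_countable (fun n : ℕ => (n:ℝ)^2)).aestronglyMeasurable)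
      measurable_snd.aemeasurable).mp (by rw [hsnd]; exact (P_m2 t).1)
    exact this
  have e1 : ∫ p : ℕ × ℕ, (p.1:ℝ)^2 ∂Q = t + (t:ℝ)^2 := by
    have := integral_map (measurable_fst.aemeasurable (μ := Q))
      ((measurable_of_countable (fun n : ℕ => (n:ℝ)^2)).aestronglyMeasurable)
    rw [hfst, (P_m2 t).2] at this
    exact this.symm
  have e2 : ∫ p : ℕ × ℕ, (p.2:ℝ)^2 ∂Q = t + (t:ℝ)^2 := by
    have := integral_map (measurable_snd.aemeasurable (μ := Q))
      ((measurable_of_countable (fun n : ℕ => (n:ℝ)^2)).aestronglyMeasurable)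
    rw [hsnd, (P_m2 t).2] at this
    exact this.symm
  have icross : Integrable (fun p : ℕ × ℕ => (p.1:ℝ) * (p.2:ℝ)) Q :=
    Integrable.mul_prod (P_m1 t).1 (P_m1 t).1
  have ecross : ∫ p : ℕ × ℕ, (p.1:ℝ) * (p.2:ℝ) ∂Q = (t:ℝ) * t := by
    rw [hQ, integral_prod_mul (fun n : ℕ => (n:ℝ)) (fun n : ℕ => (n:ℝ)), (P_m1 t).2]
  have hsq : (fun p : ℕ × ℕ => ((p.1:ℝ) - p.2)^2)
      = fun p : ℕ × ℕ => (p.1:ℝ)^2 - 2*((p.1:ℝ)*(p.2:ℝ)) + (p.2:ℝ)^2 := by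
    funext p; ring
  have iQ : Integrable (fun p : ℕ × ℕ => ((p.1:ℝ) - p.2)^2) Q := by
    rw [hsq]
    exact (i1.sub (icross.const_mul 2)).add i2
  constructor
  · rw [μS_map]
    exact (integrable_map_measure ((continuous_pow 2).aestronglyMeasurable)
      (measurable_of_countable _).aemeasurable).mpr iQ
  · rw [μS_map, integral_map (measurable_of_countable _).aemeasurable
      ((continuous_pow 2).aestronglyMeasurable)]
    show ∫ p : ℕ × ℕ, ((p.1:ℝ) - p.2)^2 ∂Q = 2*t
    rw [hsq]
    have hadd : ∫ p : ℕ × ℕ, ((p.1:ℝ)^2 - 2*((p.1:ℝ)*(p.2:ℝ)) + (p.2:ℝ)^2) ∂Q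
        = (∫ p : ℕ × ℕ, ((p.1:ℝ)^2 - 2*((p.1:ℝ)*(p.2:ℝ))) ∂Q) + ∫ p : ℕ × ℕ, (p.2:ℝ)^2 ∂Q :=
      integral_add (i1.sub (icross.const_mul 2)) i2
    have hsub : ∫ p : ℕ × ℕ, ((p.1:ℝ)^2 - 2*((p.1:ℝ)*(p.2:ℝ))) ∂Q
        = (∫ p : ℕ × ℕ, (p.1:ℝ)^2 ∂Q) - ∫ p : ℕ × ℕ, 2*((p.1:ℝ)*(p.2:ℝ)) ∂Q :=
      integral_sub i1 (icross.const_mul 2)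
    have hcm : ∫ p : ℕ × ℕ, 2*((p.1:ℝ)*(p.2:ℝ)) ∂Q = 2 * ∫ p : ℕ × ℕ, (p.1:ℝ)*(p.2:ℝ) ∂Q :=
      integral_const_mul 2 _
    rw [hadd, hsub, hcm, e1, e2, ecross]
    ring

lemma μS_ball (t : ℝ≥0) (r : ℝ) (hr0 : 0 ≤ r) (hr1 : r < 1) :
    μS t {x : ℝ | |x| ≤ r} = ENNReal.ofReal (∑' n : ℕ, (poissonPMFReal t n)^2) := by
  have hms : MeasurableSet {x : ℝ | |x| ≤ r} :=
    (isClosed_le continuous_abs continuous_const).measurableSet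
  rw [μS, Measure.map_apply (measurable_of_countable _) hms]
  have hpre : (fun z : ℤ => (z:ℝ)) ⁻¹' {x : ℝ | |x| ≤ r} = {0} := by
    ext z
    simp only [Set.mem_preimage, Set.mem_setOf_eq, Set.mem_singleton_iff]
    constructor
    · intro h
      by_contra hz
      have : (1:ℝ) ≤ |(z:ℝ)| := by
        rw [← Int.cast_abs]
        exact_mod_cast Int.one_le_abs (by omega)
      linarith
    · rintro rfl; simpa using hr0
  rw [hpre, skZ_map, Measure.map_apply (measurable_of_countable _) (measurableSet_singleton 0)]
  have hdiag : (fun p : ℕ × ℕ => (p.1:ℤ) - p.2) ⁻¹' {0} = ⋃ n : ℕ, ({(n, n)} : Set (ℕ × ℕ)) := by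
    ext p
    simp only [Set.mem_preimage, Set.mem_singleton_iff, Set.mem_iUnion, sub_eq_zero,
      Int.natCast_inj, Prod.ext_iff]
    constructor
    · intro h
      exact ⟨p.1, rfl, h.symm⟩
    · rintro ⟨n, h1, h2⟩
      rw [h1, h2]
  rw [hdiag, measure_iUnion ?_ (fun n => measurableSet_singleton _)]
  · have hsingle : ∀ n : ℕ, ((poissonMeasure t).prod (poissonMeasure t)) {((n:ℕ), (n:ℕ))}
        = ENNReal.ofReal ((poissonPMFReal t n)^2) := by
      intro n
      have hset : ({(n, n)} : Set (ℕ × ℕ)) = {n} ×ˢ {n} := by simp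
      rw [hset, Measure.prod_prod]
      rw [show poissonMeasure t {n} = ENNReal.ofReal (poissonPMFReal t n) by
        rw [poissonMeasure_singleton]; rfl]
      rw [← ENNReal.ofReal_mul poissonPMFReal_nonneg, sq]
    rw [tsum_congr hsingle, ← ENNReal.ofReal_tsum_of_nonneg (fun n => sq_nonneg _)]
    have hs1 : Summable (poissonPMFReal t) := (poissonPMFRealSum t).summable
    refine Summable.of_nonneg_of_le (fun n => sq_nonneg _) (fun n => ?_) hs1
    have hle1 : poissonPMFReal t n ≤ 1 :=
      le_hasSum (poissonPMFRealSum t) n (fun i _ => poissonPMFReal_nonneg)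
    nlinarith [poissonPMFReal_nonneg (r := t) (n := n)]
  · intro i j hij
    simp only [Function.onFun, Set.disjoint_singleton_right, Set.mem_singleton_iff, ne_eq,
      Prod.mk.injEq]
    exact fun h => hij (h.1.symm ▸ rfl) |>.elim
  


lemma summable_inv_factorial : Summable (fun n : ℕ => 1 / (n.factorial : ℝ)) := by
  have := (hasSum_exp_base 1).summable
  simpa using this

lemma summable_C : Summable (fun k : ℕ => 1 / (2^(2*k) * (k.factorial:ℝ)^2)) := by
  refine Summable.of_nonneg_of_le (fun k => by positivity) (fun k => ?_) summable_inv_factorial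
  have h1 : (1:ℝ) ≤ k.factorial := by exact_mod_cast Nat.one_le_iff_ne_zero.mpr (Nat.factorial_ne_zero k)
  have h2 : (k.factorial : ℝ) ≤ 2^(2*k) * (k.factorial:ℝ)^2 := by nlinarith [pow_pos (show (0:ℝ) < 2 by norm_num) (2*k), one_le_pow₀ (show (1:ℝ) ≤ 2 by norm_num) (n := 2*k)]
  exact one_div_le_one_div_of_le (by positivity) h2

lemma summable_pmf_sq (t : ℝ≥0) : Summable (fun n : ℕ => (poissonPMFReal t n)^2) := by
  have hs1 : Summable (poissonPMFReal t) := (poissonPMFRealSum t).summable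
  refine Summable.of_nonneg_of_le (fun n => sq_nonneg _) (fun n => ?_) hs1
  have hle1 : poissonPMFReal t n ≤ 1 :=
    le_hasSum (poissonPMFRealSum t) n (fun i _ => poissonPMFReal_nonneg)
  nlinarith [poissonPMFReal_nonneg (r := t) (n := n)]

lemma pmf_sq_eq (t : ℝ≥0) (n : ℕ) :
    (poissonPMFReal t n)^2 = exp (-2*(t:ℝ)) * ((t:ℝ)^(2*n) / ((n.factorial:ℝ)^2)) := by
  unfold poissonPMFReal
  rw [div_pow, mul_pow, ← pow_mul, ← Real.exp_nat_mul]
  norm_num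
  ring_nf

theorem PI_le_symm_poisson_value :
    sInf {r : ℝ | ∃ μ : Measure ℝ, IsProbabilityMeasure μ ∧ InfinitelyDivisible μ ∧
      Integrable (fun x => x ^ 2) μ ∧
      r = (μ {x : ℝ | |x - distMean μ| ≤ Real.sqrt (distVar μ)}).toReal} ≤
      Real.exp (-1) * ∑' k : ℕ, 1 / (2 ^ (2 * k) * (Nat.factorial k : ℝ) ^ 2) := by
  set S := {r : ℝ | ∃ μ : Measure ℝ, IsProbabilityMeasure μ ∧ InfinitelyDivisible μ ∧
      Integrable (fun x => x ^ 2) μ ∧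
      r = (μ {x : ℝ | |x - distMean μ| ≤ Real.sqrt (distVar μ)}).toReal} with hS
  set C : ℝ := ∑' k : ℕ, 1 / (2 ^ (2 * k) * (Nat.factorial k : ℝ) ^ 2) with hC
  have hC0 : 0 ≤ C := tsum_nonneg (fun k => by positivity)
  have hbdd : BddBelow S := by
    refine ⟨0, fun r hr => ?_⟩
    obtain ⟨μ, _, _, _, rfl⟩ := hr
    exact ENNReal.toReal_nonneg
  refine le_of_forall_pos_le_add (fun ε hε => ?_)
  -- choose u close to 1/2
  have htend : Tendsto (fun u : ℝ => exp (-2*u) * C) (𝓝[Set.Iio (1/2)] (1/2)) (𝓝 (exp (-1) * C)) := by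
    have hcont : Continuous (fun u : ℝ => exp (-2*u) * C) := by continuity
    have := (hcont.tendsto (1/2)).mono_left
      (nhdsWithin_le_nhds (s := Set.Iio (1/2 : ℝ)))
    simpa using this
  have hev1 : ∀ᶠ u in 𝓝[Set.Iio (1/2)] (1/2), exp (-2*u) * C < exp (-1) * C + ε :=
    htend.eventually_lt_const (by linarith)
  have hev2 : ∀ᶠ u in 𝓝[Set.Iio (1/2)] (1/2), u ∈ Set.Iio (1/2 : ℝ) := self_mem_nhdsWithin
  have hev3 : ∀ᶠ u in 𝓝[Set.Iio (1/2)] (1/2), (0:ℝ) < u :=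
    eventually_nhdsWithin_of_eventually_nhds (eventually_gt_nhds (by norm_num))
  obtain ⟨u, hu1, hu2, hu3⟩ := (hev1.and (hev2.and hev3)).exists
  set t : ℝ≥0 := ⟨u, hu3.le⟩ with ht
  have htu : (t : ℝ) = u := rfl
  have hthalf : (t : ℝ) < 1/2 := hu2
  have ht0 : (0:ℝ) ≤ t := hu3.le
  haveI : IsProbabilityMeasure (μS t) := inferInstance
  -- compute mean/var
  have hmean : distMean (μS t) = 0 := μS_mean t
  have hvar : distVar (μS t) = 2*(t:ℝ) := by
    unfold distVar
    rw [hmean]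
    simp only [sub_zero]
    exact (μS_var t).2
  have hset : {x : ℝ | |x - distMean (μS t)| ≤ Real.sqrt (distVar (μS t))}
      = {x : ℝ | |x| ≤ Real.sqrt (2*(t:ℝ))} := by
    rw [hmean, hvar]
    simp
  have hlt1 : Real.sqrt (2*(t:ℝ)) < 1 := by
    have : Real.sqrt (2*(t:ℝ)) < Real.sqrt 1 :=
      Real.sqrt_lt_sqrt (by positivity) (by linarith)
    simpa [Real.sqrt_one] using this
  have hval : (μS t {x : ℝ | |x - distMean (μS t)| ≤ Real.sqrt (distVar (μS t))}).toReal
      = ∑' n : ℕ, (poissonPMFReal t n)^2 := by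
    rw [hset, μS_ball t _ (Real.sqrt_nonneg _) hlt1,
      ENNReal.toReal_ofReal (tsum_nonneg (fun n => sq_nonneg _))]
  have hmem : (∑' n : ℕ, (poissonPMFReal t n)^2) ∈ S := by
    rw [hS]
    exact ⟨μS t, inferInstance, μS_infdiv t, (μS_var t).1, hval.symm⟩
  refine le_trans (csInf_le hbdd hmem) ?_
  -- bound the sum
  have hterm : ∀ n : ℕ, (poissonPMFReal t n)^2
      ≤ exp (-2*u) * (1 / (2^(2*n) * (n.factorial:ℝ)^2)) := by
    intro n
    rw [pmf_sq_eq, htu]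
    have hpow : u^(2*n) ≤ (1/2:ℝ)^(2*n) := pow_le_pow_left₀ hu3.le hu2.le _
    have heq : (1/2:ℝ)^(2*n) / ((n.factorial:ℝ)^2) = 1 / (2^(2*n) * (n.factorial:ℝ)^2) := by
      rw [div_pow]
      simp
      ring
    calc exp (-2*u) * (u^(2*n) / ((n.factorial:ℝ)^2))
        ≤ exp (-2*u) * ((1/2:ℝ)^(2*n) / ((n.factorial:ℝ)^2)) := by gcongr
      _ = exp (-2*u) * (1 / (2^(2*n) * (n.factorial:ℝ)^2)) := by rw [heq]
  have hsum_le : (∑' n : ℕ, (poissonPMFReal t n)^2) ≤ exp (-2*u) * C := by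
    have h2 : (∑' n : ℕ, exp (-2*u) * (1 / (2^(2*n) * (n.factorial:ℝ)^2))) = exp (-2*u) * C := by
      rw [tsum_mul_left]
    rw [← h2]
    exact Summable.tsum_le_tsum hterm (summable_pmf_sq t) (summable_C.mul_left _)
  exact hsum_le.trans hu1.le
end

section
/- The function λ ↦ e^{−2λ} ∑_{k=0}^{∞} λ^{2k}/(k!)² is strictly decreasing on the interval (0, 1/2); equivalently, for independent Poisson random variables N_λ, N'_λ with parameter λ, the function λ ↦ P{N_λ − N'_λ = 0} is strictly decreasing for λ ∈ (0, 1/2). -/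
set_option maxHeartbeats 1000000


open MeasureTheory Real ProbabilityTheory
open scoped NNReal

/-- The law of the difference of two independent Poisson random variables with
the same parameter `lam`. -/
noncomputable def symmPoissonMeasure (lam : ℝ≥0) : Measure ℤ :=
  ((poissonMeasure lam).prod (poissonMeasure lam)).map
    (fun x : ℕ × ℕ => (x.1 : ℤ) - (x.2 : ℤ))

namespace SymmPoissonAux

noncomputable def S (x : ℝ) : ℝ := ∑' k : ℕ, x ^ (2 * k) / (Nat.factorial k : ℝ) ^ 2

noncomputable def S' (x : ℝ) : ℝ :=
  ∑' k : ℕ, (2 * k : ℝ) * x ^ (2 * k - 1) / (Nat.factorial k : ℝ) ^ 2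

lemma summable_g (x : ℝ) : Summable (fun k : ℕ => x ^ (2 * k) / (Nat.factorial k : ℝ) ^ 2) := by
  refine Summable.of_nonneg_of_le (fun k => ?_) (fun k => ?_)
    (Real.summable_pow_div_factorial (x ^ 2))
  · rw [pow_mul]; positivity
  · rw [pow_mul]
    have h1 : (1 : ℝ) ≤ (Nat.factorial k : ℝ) := by
      exact_mod_cast Nat.one_le_iff_ne_zero.mpr (Nat.factorial_ne_zero k)
    have h2 : (Nat.factorial k : ℝ) ≤ (Nat.factorial k : ℝ) ^ 2 := by nlinarith
    exact div_le_div₀ (by positivity) le_rfl (by linarith) h2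

lemma summable_u : Summable (fun k : ℕ => (2 * k : ℝ) / (Nat.factorial k : ℝ) ^ 2) := by
  refine Summable.of_nonneg_of_le (fun k => by positivity) (fun k => ?_)
    ((Real.summable_pow_div_factorial 2).mul_left 2)
  have hk : (k : ℝ) ≤ 2 ^ k := by exact_mod_cast (Nat.lt_two_pow_self (n := k)).le
  have h1 : (1 : ℝ) ≤ (Nat.factorial k : ℝ) := by
    exact_mod_cast Nat.one_le_iff_ne_zero.mpr (Nat.factorial_ne_zero k)
  have h2 : (Nat.factorial k : ℝ) ≤ (Nat.factorial k : ℝ) ^ 2 := by nlinarith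
  have : (2 * k : ℝ) / (Nat.factorial k : ℝ) ^ 2 = 2 * ((k:ℝ) / (Nat.factorial k : ℝ) ^ 2) := by
    ring
  rw [this]
  exact mul_le_mul_of_nonneg_left (div_le_div₀ (by positivity) hk (by linarith) h2) (by norm_num)

lemma bound_d (k : ℕ) {y : ℝ} (hy : |y| ≤ 1) :
    ‖(2 * k : ℝ) * y ^ (2 * k - 1) / (Nat.factorial k : ℝ) ^ 2‖
      ≤ (2 * k : ℝ) / (Nat.factorial k : ℝ) ^ 2 := by
  rw [Real.norm_eq_abs, abs_div, abs_mul, abs_pow]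
  rw [abs_of_nonneg (by positivity : (0:ℝ) ≤ (2 * k : ℝ))]
  rw [abs_of_nonneg (by positivity : (0:ℝ) ≤ ((Nat.factorial k : ℝ)) ^ 2)]
  have h1 : |y| ^ (2 * k - 1) ≤ 1 := pow_le_one₀ (abs_nonneg y) hy
  have h2 : (2 * k : ℝ) * |y| ^ (2 * k - 1) ≤ 2 * k := by
    nlinarith [pow_nonneg (abs_nonneg y) (2 * k - 1)]
  exact div_le_div_of_nonneg_right h2 (by positivity) |>.trans le_rfl

lemma summable_d (x : ℝ) (hx : |x| ≤ 1) :
    Summable (fun k : ℕ => (2 * k : ℝ) * x ^ (2 * k - 1) / (Nat.factorial k : ℝ) ^ 2) :=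
  Summable.of_norm_bounded summable_u (fun k => bound_d k hx)

lemma hasDerivAt_S {x : ℝ} (hx : x ∈ Set.Ioo (-1 : ℝ) 1) : HasDerivAt S (S' x) x := by
  apply hasDerivAt_tsum_of_isPreconnected summable_u isOpen_Ioo
    (convex_Ioo (-1 : ℝ) 1).isPreconnected
    (g := fun k z => z ^ (2 * k) / (Nat.factorial k : ℝ) ^ 2)
    (g' := fun k z => (2 * k : ℝ) * z ^ (2 * k - 1) / (Nat.factorial k : ℝ) ^ 2)
    (y₀ := 0) ?_ ?_ (by norm_num) (summable_g 0) hx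
  · intro k y _
    have h := (hasDerivAt_pow (2 * k) y).div_const ((Nat.factorial k : ℝ) ^ 2)
    show HasDerivAt (fun z => z ^ (2 * k) / (Nat.factorial k : ℝ) ^ 2)
      ((2 * k : ℝ) * y ^ (2 * k - 1) / (Nat.factorial k : ℝ) ^ 2) y
    have he : (2 * k : ℝ) * y ^ (2 * k - 1) / (Nat.factorial k : ℝ) ^ 2
        = ((2 * k : ℕ) : ℝ) * y ^ (2 * k - 1) / (Nat.factorial k : ℝ) ^ 2 := by push_cast; ring
    rw [he]
    exact h
  · intro k y hy
    have hy1 : |y| ≤ 1 := by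
      rw [abs_le]; exact ⟨hy.1.le, hy.2.le⟩
    exact bound_d k hy1

lemma S'_lt {x : ℝ} (hx : x ∈ Set.Ioo (0 : ℝ) (1 / 2)) : S' x < 2 * S x := by
  obtain ⟨hx0, hx1⟩ := hx
  have hxabs : |x| ≤ 1 := by rw [abs_of_pos hx0]; linarith
  have hd := summable_d x hxabs
  rw [S', hd.tsum_eq_zero_add]
  simp only [Nat.cast_zero, mul_zero, zero_mul, zero_div, zero_add]
  rw [S, ← tsum_mul_left]
  have hshift : Summable (fun k : ℕ =>
      (2 * (k + 1 : ℕ) : ℝ) * x ^ (2 * (k + 1) - 1) / (Nat.factorial (k + 1) : ℝ) ^ 2) :=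
    (summable_nat_add_iff 1).mpr hd
  apply Summable.tsum_lt_tsum_of_nonneg (i := 0) ?_ ?_ ?_ ((summable_g x).mul_left 2)
  · intro k; positivity
  · intro k
    have hfac : ((Nat.factorial (k + 1) : ℝ)) ^ 2 = (k + 1 : ℝ) ^ 2 * (Nat.factorial k : ℝ) ^ 2 := by
      rw [Nat.factorial_succ]; push_cast; ring
    have hexp : 2 * (k + 1) - 1 = 2 * k + 1 := by omega
    rw [hfac, hexp, pow_succ]
    have hfk : (0 : ℝ) < (Nat.factorial k : ℝ) := by exact_mod_cast Nat.factorial_pos k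
    have hk1 : (0 : ℝ) < (k + 1 : ℝ) := by positivity
    have hR : 2 * (x ^ (2 * k) / (Nat.factorial k : ℝ) ^ 2)
        = (2 * x ^ (2 * k)) / (Nat.factorial k : ℝ) ^ 2 := by ring
    rw [hR, div_le_div_iff₀ (by positivity) (by positivity)]
    have h3 : (0:ℝ) ≤ x ^ (2 * k) * (Nat.factorial k : ℝ) ^ 2 * ((k : ℝ) + 1 - x) * ((k : ℝ) + 1) :=
      mul_nonneg (mul_nonneg (mul_nonneg (by positivity) (by positivity)) (by linarith)) hk1.le
    push_cast
    nlinarith [h3]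
  · -- strict at 0
    norm_num [Nat.factorial]
    linarith

lemma hasDerivAt_f {x : ℝ} (hx : x ∈ Set.Ioo (-1 : ℝ) 1) :
    HasDerivAt (fun y : ℝ => Real.exp (-2 * y) * S y)
      (Real.exp (-2 * x) * (-2) * S x + Real.exp (-2 * x) * S' x) x := by
  have h1 : HasDerivAt (fun y : ℝ => Real.exp (-2 * y)) (Real.exp (-2 * x) * (-2)) x := by
    have : HasDerivAt (fun y : ℝ => (-2 : ℝ) * y) (-2) x := by
      simpa using (hasDerivAt_id x).const_mul (-2 : ℝ)
    exact this.exp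
  exact h1.mul (hasDerivAt_S hx)

lemma part1 : StrictAntiOn
    (fun lam : ℝ => Real.exp (-2 * lam) *
      ∑' k : ℕ, lam ^ (2 * k) / (Nat.factorial k : ℝ) ^ 2)
    (Set.Ioo 0 (1 / 2)) := by
  have hsub : Set.Ioo (0 : ℝ) (1 / 2) ⊆ Set.Ioo (-1 : ℝ) 1 := by
    intro y hy; constructor <;> [linarith [hy.1]; linarith [hy.2]]
  have heq : (fun lam : ℝ => Real.exp (-2 * lam) *
      ∑' k : ℕ, lam ^ (2 * k) / (Nat.factorial k : ℝ) ^ 2)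
      = fun y => Real.exp (-2 * y) * S y := rfl
  rw [heq]
  apply strictAntiOn_of_deriv_neg (convex_Ioo 0 (1 / 2))
  · intro y hy
    exact (hasDerivAt_f (hsub hy)).continuousAt.continuousWithinAt
  · intro y hy
    rw [interior_Ioo] at hy
    rw [(hasDerivAt_f (hsub hy)).deriv]
    have hS : S' y < 2 * S y := S'_lt hy
    have hexp : 0 < Real.exp (-2 * y) := Real.exp_pos _
    nlinarith

lemma S_pos_stuff : True := trivial

lemma measure_eq (lam : ℝ≥0) :
    (symmPoissonMeasure lam {(0 : ℤ)}).toReal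
      = Real.exp (-2 * (lam : ℝ)) *
        ∑' k : ℕ, (lam : ℝ) ^ (2 * k) / (Nat.factorial k : ℝ) ^ 2 := by
  have hmeas : Measurable (fun x : ℕ × ℕ => (x.1 : ℤ) - (x.2 : ℤ)) :=
    measurable_of_countable _
  rw [symmPoissonMeasure, Measure.map_apply hmeas (measurableSet_singleton 0)]
  have hset : (fun x : ℕ × ℕ => (x.1 : ℤ) - (x.2 : ℤ)) ⁻¹' {(0 : ℤ)}
      = {x : ℕ × ℕ | x.1 = x.2} := by
    ext ⟨a, b⟩
    simp [sub_eq_zero]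
  rw [hset, Measure.prod_apply (Set.to_countable _).measurableSet]
  have hpre : ∀ a : ℕ, (Prod.mk a ⁻¹' {x : ℕ × ℕ | x.1 = x.2}) = {a} := by
    intro a; ext b; simp [eq_comm]
  simp only [hpre]
  rw [lintegral_countable']
  have hsing : ∀ a : ℕ, poissonMeasure lam {a} = ENNReal.ofReal (poissonPMFReal lam a) := by
    intro a
    rw [poissonMeasure_singleton]
    rfl
  simp only [hsing]
  rw [ENNReal.tsum_toReal_eq (fun a => by
    exact ENNReal.mul_ne_top ENNReal.ofReal_ne_top ENNReal.ofReal_ne_top)]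
  have hterm : ∀ a : ℕ,
      (ENNReal.ofReal (poissonPMFReal lam a) * ENNReal.ofReal (poissonPMFReal lam a)).toReal
        = Real.exp (-2 * (lam : ℝ)) * ((lam : ℝ) ^ (2 * a) / (Nat.factorial a : ℝ) ^ 2) := by
    intro a
    rw [ENNReal.toReal_mul, ENNReal.toReal_ofReal poissonPMFReal_nonneg]
    rw [poissonPMFReal]
    have hexp : Real.exp (-(lam : ℝ)) * Real.exp (-(lam : ℝ)) = Real.exp (-2 * (lam : ℝ)) := by
      rw [← Real.exp_add]; ring_nf
    have hpow : ((lam : ℝ) ^ a) ^ 2 = (lam : ℝ) ^ (2 * a) := by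
      rw [mul_comm 2 a, pow_mul]
    calc Real.exp (-(lam : ℝ)) * (lam : ℝ) ^ a / (Nat.factorial a : ℝ)
          * (Real.exp (-(lam : ℝ)) * (lam : ℝ) ^ a / (Nat.factorial a : ℝ))
        = Real.exp (-(lam : ℝ)) * Real.exp (-(lam : ℝ))
          * (((lam : ℝ) ^ a) ^ 2 / (Nat.factorial a : ℝ) ^ 2) := by ring
      _ = Real.exp (-2 * (lam : ℝ)) * ((lam : ℝ) ^ (2 * a) / (Nat.factorial a : ℝ) ^ 2) := by
          rw [hexp, hpow]
  rw [tsum_congr hterm, tsum_mul_left]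

end SymmPoissonAux

theorem symm_poisson_pmf_zero_strictAnti :
    StrictAntiOn
      (fun lam : ℝ => Real.exp (-2 * lam) *
        ∑' k : ℕ, lam ^ (2 * k) / (Nat.factorial k : ℝ) ^ 2)
      (Set.Ioo 0 (1 / 2)) ∧
    StrictAntiOn
      (fun lam : ℝ≥0 => (symmPoissonMeasure lam {(0 : ℤ)}).toReal)
      (Set.Ioo 0 (1 / 2)) := by
  refine ⟨SymmPoissonAux.part1, ?_⟩
  intro a ha b hb hab
  have ha' : (a : ℝ) ∈ Set.Ioo (0 : ℝ) (1 / 2) := by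
    constructor
    · exact_mod_cast ha.1
    · have := ha.2
      calc (a : ℝ) < ((1 / 2 : ℝ≥0) : ℝ) := by exact_mod_cast this
        _ = 1 / 2 := by norm_num
  have hb' : (b : ℝ) ∈ Set.Ioo (0 : ℝ) (1 / 2) := by
    constructor
    · exact_mod_cast hb.1
    · have := hb.2
      calc (b : ℝ) < ((1 / 2 : ℝ≥0) : ℝ) := by exact_mod_cast this
        _ = 1 / 2 := by norm_num
  simp only [SymmPoissonAux.measure_eq]
  exact SymmPoissonAux.part1 ha' hb' (by exact_mod_cast hab)
end
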